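/- arXiv:1401.3928 — 13 statements merged into one kernel-verified Lean document; each statement's English description precedes it below -/
import Mathlib

section
/- If there exists a binary constant-weight code of length n, weight w, and minimum Hamming distance d1 with at least q codewords, and there exists a q-ary code of length m and minimum Hamming distance d2 with M codewords, then there exists a multiply constant-weight code MCWC(m,n,d1*d2,w) (a binary code of length mn, whose codewords have weight exactly w in each of the m consecutive blocks of length n, with minimum distance d1*d2) with M codewords. In particular M(m,n,d1*d2,w) >= A_q(m,d2) whenever q <= A(n,d1,w). -/
open Finset

/-- Hamming weight of a binary word. -/
def wt {n : ℕ} (x : Fin n → Bool) : ℕ := (Finset.univ.filter fun i => x i = true).card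

/-- `A n d w`: max size of a binary constant-weight code of length `n`, distance `d`, weight `w`. -/
noncomputable def A (n d w : ℕ) : ℕ :=
  sSup {s | ∃ C : Finset (Fin n → Bool), C.card = s ∧
    (∀ x ∈ C, wt x = w) ∧ ∀ x ∈ C, ∀ y ∈ C, x ≠ y → d ≤ hammingDist x y}

/-- `Aq q m d`: max size of a `q`-ary code of length `m` with minimum distance `d`. -/
noncomputable def Aq (q m d : ℕ) : ℕ :=
  sSup {s | ∃ C : Finset (Fin m → Fin q), C.card = s ∧
    ∀ x ∈ C, ∀ y ∈ C, x ≠ y → d ≤ hammingDist x y}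

/-- `M m n d w`: max size of a multiply constant-weight code: `m × n` binary matrices with
constant row weight `w` and pairwise (flattened) Hamming distance at least `d`. -/
noncomputable def M (m n d w : ℕ) : ℕ :=
  sSup {s | ∃ C : Finset (Fin m → Fin n → Bool), C.card = s ∧
    (∀ x ∈ C, ∀ i, wt (x i) = w) ∧
    ∀ x ∈ C, ∀ y ∈ C, x ≠ y → d ≤ ∑ i, hammingDist (x i) (y i)}

/-- Concatenation bound: if `q ≤ A(n,d₁,w)` then `M(m,n,d₁d₂,w) ≥ A_q(m,d₂)`. -/
theorem stmt0 (m n d1 d2 w q : ℕ) (hq : q ≤ A n d1 w) :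
    Aq q m d2 ≤ M m n (d1 * d2) w := by
  classical
  -- Obtain an optimal constant-weight code D with D.card = A n d1 w
  have hAbdd : BddAbove {s | ∃ C : Finset (Fin n → Bool), C.card = s ∧
      (∀ x ∈ C, wt x = w) ∧ ∀ x ∈ C, ∀ y ∈ C, x ≠ y → d1 ≤ hammingDist x y} := by
    refine ⟨Fintype.card (Fin n → Bool), ?_⟩
    rintro s ⟨C, rfl, -, -⟩
    exact le_trans C.card_le_univ (le_of_eq Finset.card_univ)
  obtain ⟨D, hDcard, hDwt, hDdist⟩ :
      A n d1 w ∈ {s | ∃ C : Finset (Fin n → Bool), C.card = s ∧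
      (∀ x ∈ C, wt x = w) ∧ ∀ x ∈ C, ∀ y ∈ C, x ≠ y → d1 ≤ hammingDist x y} :=
    Nat.sSup_mem ⟨0, ∅, by simp⟩ hAbdd
  -- Obtain an optimal q-ary code C with C.card = Aq q m d2
  have hQbdd : BddAbove {s | ∃ C : Finset (Fin m → Fin q), C.card = s ∧
      ∀ x ∈ C, ∀ y ∈ C, x ≠ y → d2 ≤ hammingDist x y} := by
    refine ⟨Fintype.card (Fin m → Fin q), ?_⟩
    rintro s ⟨C, rfl, -⟩
    exact le_trans C.card_le_univ (le_of_eq Finset.card_univ)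
  obtain ⟨C, hCcard, hCdist⟩ :
      Aq q m d2 ∈ {s | ∃ C : Finset (Fin m → Fin q), C.card = s ∧
      ∀ x ∈ C, ∀ y ∈ C, x ≠ y → d2 ≤ hammingDist x y} :=
    Nat.sSup_mem ⟨0, ∅, by simp⟩ hQbdd
  -- an injection from Fin q into D
  have hqD : q ≤ D.card := hq.trans_eq hDcard.symm
  set φ : Fin q → (Fin n → Bool) :=
    fun k => (D.equivFin.symm ⟨k, lt_of_lt_of_le k.isLt hqD⟩ : (Fin n → Bool)) with hφ
  have hφmem : ∀ k, φ k ∈ D := fun k => (D.equivFin.symm _).2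
  have hφinj : Function.Injective φ := by
    intro a b hab
    have : D.equivFin.symm ⟨a, lt_of_lt_of_le a.isLt hqD⟩ =
        D.equivFin.symm ⟨b, lt_of_lt_of_le b.isLt hqD⟩ := Subtype.ext hab
    have h2 := D.equivFin.symm.injective this
    injection h2 with h
    exact Fin.ext h
  -- concatenation map
  set Φ : (Fin m → Fin q) → (Fin m → Fin n → Bool) := fun c i => φ (c i) with hΦ
  have hΦinj : Function.Injective Φ := by
    intro a b hab
    funext i
    exact hφinj (congrFun hab i)
  set E : Finset (Fin m → Fin n → Bool) := C.image Φ with hE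
  have hEcard : E.card = Aq q m d2 := by
    rw [hE, Finset.card_image_of_injective _ hΦinj, hCcard]
  -- key distance estimate
  have key : ∀ x ∈ C, ∀ y ∈ C, x ≠ y →
      d1 * d2 ≤ ∑ i, hammingDist (Φ x i) (Φ y i) := by
    intro x hx y hy hxy
    have h1 : d1 * d2 ≤ d1 * hammingDist x y :=
      Nat.mul_le_mul_left d1 (hCdist x hx y hy hxy)
    refine h1.trans ?_
    have : d1 * hammingDist x y = ∑ _i ∈ Finset.univ.filter (fun i => x i ≠ y i), d1 := by
      rw [Finset.sum_const, smul_eq_mul, mul_comm]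
      rfl
    rw [this]
    calc ∑ _i ∈ Finset.univ.filter (fun i => x i ≠ y i), d1
        ≤ ∑ i ∈ Finset.univ.filter (fun i => x i ≠ y i),
            hammingDist (Φ x i) (Φ y i) := by
          refine Finset.sum_le_sum ?_
          intro i hi
          have hne : x i ≠ y i := (Finset.mem_filter.1 hi).2
          exact hDdist _ (hφmem (x i)) _ (hφmem (y i)) (fun h => hne (hφinj h))
      _ ≤ ∑ i, hammingDist (Φ x i) (Φ y i) :=
          Finset.sum_le_sum_of_subset (Finset.filter_subset _ _)
  -- membership in the M-set
  have hMmem : Aq q m d2 ∈ {s | ∃ C : Finset (Fin m → Fin n → Bool), C.card = s ∧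
      (∀ x ∈ C, ∀ i, wt (x i) = w) ∧
      ∀ x ∈ C, ∀ y ∈ C, x ≠ y → d1 * d2 ≤ ∑ i, hammingDist (x i) (y i)} := by
    refine ⟨E, hEcard, ?_, ?_⟩
    · intro x hx i
      obtain ⟨c, hc, rfl⟩ := Finset.mem_image.1 hx
      exact hDwt _ (hφmem (c i))
    · intro x hx y hy hxy
      obtain ⟨c, hc, rfl⟩ := Finset.mem_image.1 hx
      obtain ⟨c', hc', rfl⟩ := Finset.mem_image.1 hy
      exact key c hc c' hc' (fun h => hxy (congrArg Φ h))
  have hMbdd : BddAbove {s | ∃ C : Finset (Fin m → Fin n → Bool), C.card = s ∧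
      (∀ x ∈ C, ∀ i, wt (x i) = w) ∧
      ∀ x ∈ C, ∀ y ∈ C, x ≠ y → d1 * d2 ≤ ∑ i, hammingDist (x i) (y i)} := by
    refine ⟨Fintype.card (Fin m → Fin n → Bool), ?_⟩
    rintro s ⟨C, rfl, -, -⟩
    exact le_trans C.card_le_univ (le_of_eq Finset.card_univ)
  exact le_csSup hMbdd hMmem
end

section
/- If C is a binary code of length n, minimum distance d, and size 2^k that is systematic (there is a k-subset I of coordinates such that the restriction of C to I is all of F_2^k), then the code D = {(x, complement of x) : x in C} of length 2n is a systematic constant-weight code of weight n and minimum distance 2d with 2^k codewords. Hence S(2n,2d,n) >= S(n,d). -/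
open Finset

/-- A code of size `2^k` is systematic w.r.t. some `k`-set of coordinates on which it projects
bijectively onto all binary `k`-tuples. -/
def Systematic {n : ℕ} (C : Finset (Fin n → Bool)) (k : ℕ) : Prop :=
  ∃ I : Finset (Fin n), I.card = k ∧
    ∀ f : Fin n → Bool, ∃! x, x ∈ C ∧ ∀ i ∈ I, x i = f i

/-- `Ssys n d`: the largest size of a systematic binary `(n,d)` code. -/
noncomputable def Ssys (n d : ℕ) : ℕ :=
  sSup {s | ∃ k, s = 2 ^ k ∧ ∃ C : Finset (Fin n → Bool), C.card = 2 ^ k ∧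
    Systematic C k ∧ ∀ x ∈ C, ∀ y ∈ C, x ≠ y → d ≤ hammingDist x y}

/-- `Ssyscw n d w`: the largest size of a systematic binary constant-weight `(n,d,w)` code. -/
noncomputable def Ssyscw (n d w : ℕ) : ℕ :=
  sSup {s | ∃ k, s = 2 ^ k ∧ ∃ C : Finset (Fin n → Bool), C.card = 2 ^ k ∧
    Systematic C k ∧ (∀ x ∈ C, wt x = w) ∧
    ∀ x ∈ C, ∀ y ∈ C, x ≠ y → d ≤ hammingDist x y}

/-- `D = {(x, x̄) : x ∈ C}`. -/
def doubleCode {n : ℕ} (C : Finset (Fin n → Bool)) : Finset (Fin (n + n) → Bool) :=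
  C.image fun x => Fin.append x (fun i => ! x i)

lemma dbl_inj {n : ℕ} :
    Function.Injective (fun x : Fin n → Bool => Fin.append x (fun i => ! x i)) := by
  intro x y h
  funext i
  have := congrFun h (Fin.castAdd n i)
  simpa [Fin.append_left] using this

lemma wt_dbl {n : ℕ} (x : Fin n → Bool) :
    wt (Fin.append x (fun i => ! x i)) = n := by
  unfold wt
  rw [Finset.card_filter, Fin.sum_univ_add]
  simp only [Fin.append_left, Fin.append_right]
  rw [← Finset.sum_add_distrib]
  have : ∀ i : Fin n, ((if x i = true then 1 else 0) + (if x i = false then 1 else 0)) = 1 := by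
    intro i; cases h : x i <;> simp [h]
  simp [this]

lemma hd_dbl {n : ℕ} (x y : Fin n → Bool) :
    hammingDist (Fin.append x (fun i => ! x i)) (Fin.append y (fun i => ! y i))
      = 2 * hammingDist x y := by
  show (Finset.univ.filter _).card = 2 * (Finset.univ.filter _).card
  rw [Finset.card_filter, Finset.card_filter, Fin.sum_univ_add]
  simp only [Fin.append_left, Fin.append_right]
  have : ∀ i : Fin n, (if (!x i) ≠ (!y i) then 1 else 0) = (if x i ≠ y i then (1:ℕ) else 0) := by
    intro i; cases h : x i <;> cases h' : y i <;> simp [h, h']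
  rw [Finset.sum_congr rfl fun i _ => this i]
  ring

lemma main_dbl (n d k : ℕ) (C : Finset (Fin n → Bool)) (hcard : C.card = 2 ^ k)
    (hsys : Systematic C k)
    (hd : ∀ x ∈ C, ∀ y ∈ C, x ≠ y → d ≤ hammingDist x y) :
    (doubleCode C).card = 2 ^ k ∧
     (∀ y ∈ doubleCode C, wt y = n) ∧
     Systematic (doubleCode C) k ∧
     (∀ y ∈ doubleCode C, ∀ z ∈ doubleCode C, y ≠ z → 2 * d ≤ hammingDist y z) := by
  refine ⟨?_, ?_, ?_, ?_⟩
  · rw [doubleCode, Finset.card_image_of_injective _ dbl_inj, hcard]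
  · rintro y hy
    obtain ⟨x, _, rfl⟩ := Finset.mem_image.1 hy
    exact wt_dbl x
  · obtain ⟨I, hIcard, hI⟩ := hsys
    refine ⟨I.image (Fin.castAdd n), ?_, ?_⟩
    · rw [Finset.card_image_of_injective _ (Fin.castAdd_injective n n), hIcard]
    · intro f
      obtain ⟨x, ⟨hxC, hxI⟩, hxu⟩ := hI (fun i => f (Fin.castAdd n i))
      refine ⟨Fin.append x (fun i => ! x i), ⟨Finset.mem_image_of_mem _ hxC, ?_⟩, ?_⟩
      · intro j hj
        obtain ⟨i, hi, rfl⟩ := Finset.mem_image.1 hj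
        simpa [Fin.append_left] using hxI i hi
      · rintro y ⟨hyD, hyI⟩
        obtain ⟨x', hx'C, rfl⟩ := Finset.mem_image.1 hyD
        have : x' = x := by
          refine hxu x' ⟨hx'C, fun i hi => ?_⟩
          have := hyI (Fin.castAdd n i) (Finset.mem_image_of_mem _ hi)
          simpa [Fin.append_left] using this
        rw [this]
  · rintro y hy z hz hne
    obtain ⟨x, hx, rfl⟩ := Finset.mem_image.1 hy
    obtain ⟨x', hx', rfl⟩ := Finset.mem_image.1 hz
    have hxx : x ≠ x' := fun h => hne (by rw [h])
    rw [hd_dbl]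
    exact Nat.mul_le_mul_left 2 (hd x hx x' hx' hxx)

/-- Böinck–van Tilborg: from a systematic `(n,d)` code of size `2^k`, the code
`{(x,x̄)}` is a systematic constant-weight code of length `2n`, weight `n`,
distance `2d`, size `2^k`; hence `S(2n,2d,n) ≥ S(n,d)`. -/
theorem stmt2 (n d k : ℕ) (C : Finset (Fin n → Bool)) (hcard : C.card = 2 ^ k)
    (hsys : Systematic C k)
    (hd : ∀ x ∈ C, ∀ y ∈ C, x ≠ y → d ≤ hammingDist x y) :
    ((doubleCode C).card = 2 ^ k ∧
     (∀ y ∈ doubleCode C, wt y = n) ∧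
     Systematic (doubleCode C) k ∧
     (∀ y ∈ doubleCode C, ∀ z ∈ doubleCode C, y ≠ z → 2 * d ≤ hammingDist y z)) ∧
    Ssys n d ≤ Ssyscw (n + n) (2 * d) n := by
  refine ⟨main_dbl n d k C hcard hsys hd, ?_⟩
  apply csSup_le_csSup
  · refine ⟨2 ^ (n + n), ?_⟩
    rintro s ⟨k', rfl, C', hc', -⟩
    calc (2:ℕ) ^ k' = C'.card := hc'.symm
      _ ≤ (Finset.univ : Finset (Fin (n + n) → Bool)).card := Finset.card_le_univ _
      _ = 2 ^ (n + n) := by simp [Finset.card_univ]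
  · exact ⟨2 ^ k, k, rfl, C, hcard, hsys, hd⟩
  · rintro s ⟨k', rfl, C', hc', hs', hd'⟩
    obtain ⟨h1, h2, h3, h4⟩ := main_dbl n d k' C' hc' hs' hd'
    exact ⟨k', rfl, doubleCode C', h1, h3, h2, h4⟩
end

section
/- If there exists a binary constant-weight code of length n, weight w, minimum distance d, and size at least 2^k, then there exists a systematic binary constant-weight code of length n+2k, weight w+k, and minimum distance d+2 with 2^k codewords. Specifically, for any injection phi: F_2^k -> C, the code D = {(x, x̄, phi(x)) : x in F_2^k} has these parameters and is systematic with information set the first k coordinates. -/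
open Finset

/-- `D = {(x, x̄, φ(x)) : x ∈ 𝔽₂^k}`. -/
def tripleCode {k n : ℕ} (phi : (Fin k → Bool) → (Fin n → Bool)) :
    Finset (Fin (k + k + n) → Bool) :=
  Finset.univ.image fun x => Fin.append (Fin.append x (fun i => ! x i)) (phi x)

lemma wt_eq_sum {n : ℕ} (x : Fin n → Bool) :
    wt x = ∑ i, (if x i = true then 1 else 0) := by
  rw [wt, Finset.card_filter]

lemma wt_append {m n : ℕ} (a : Fin m → Bool) (b : Fin n → Bool) :
    wt (Fin.append a b) = wt a + wt b := by
  rw [wt_eq_sum, wt_eq_sum, wt_eq_sum, Fin.sum_univ_add]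
  simp [Fin.append_left, Fin.append_right]

lemma hammingDist_eq_sum {n : ℕ} (x y : Fin n → Bool) :
    hammingDist x y = ∑ i, (if x i ≠ y i then 1 else 0) := by
  rw [hammingDist, Finset.card_filter]

lemma hammingDist_append {m n : ℕ} (a c : Fin m → Bool) (b d : Fin n → Bool) :
    hammingDist (Fin.append a b) (Fin.append c d) = hammingDist a c + hammingDist b d := by
  rw [hammingDist_eq_sum, hammingDist_eq_sum, hammingDist_eq_sum, Fin.sum_univ_add]
  simp [Fin.append_left, Fin.append_right]

/-- Extension: given a CWC`(n,d,w)` `C` and an injection `φ : 𝔽₂^k → C`, the code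
`{(x, x̄, φ(x))}` is a systematic constant-weight code of length `n+2k`, weight `w+k`,
distance `d+2`, size `2^k`; hence `s(n+2k, d+2, w+k) ≥ k`. -/
theorem stmt3 (n d w k : ℕ) (C : Finset (Fin n → Bool))
    (hwt : ∀ x ∈ C, wt x = w)
    (hd : ∀ x ∈ C, ∀ y ∈ C, x ≠ y → d ≤ hammingDist x y)
    (phi : (Fin k → Bool) → (Fin n → Bool)) (hphi : Function.Injective phi)
    (hrange : ∀ x, phi x ∈ C) :
    (tripleCode phi).card = 2 ^ k ∧
    (∀ y ∈ tripleCode phi, wt y = w + k) ∧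
    (∀ y ∈ tripleCode phi, ∀ z ∈ tripleCode phi, y ≠ z → d + 2 ≤ hammingDist y z) ∧
    Systematic (tripleCode phi) k ∧
    2 ^ k ≤ Ssyscw (k + k + n) (d + 2) (w + k) := by
  set g : (Fin k → Bool) → (Fin (k + k + n) → Bool) :=
    fun x => Fin.append (Fin.append x (fun i => ! x i)) (phi x) with hg
  have hrec : ∀ x (i : Fin k), g x (Fin.castAdd n (Fin.castAdd k i)) = x i := by
    intro x i
    simp [hg, Fin.append_left]
  have hginj : Function.Injective g := by
    intro x y hxy
    funext i
    have := congrFun hxy (Fin.castAdd n (Fin.castAdd k i))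
    rwa [hrec, hrec] at this
  have hcard : (tripleCode phi).card = 2 ^ k := by
    rw [tripleCode, Finset.card_image_of_injective _ hginj, Finset.card_univ]
    simp
  have hwtg : ∀ x, wt (g x) = w + k := by
    intro x
    have h1 : wt (g x) = wt (Fin.append x (fun i => ! x i)) + wt (phi x) :=
      wt_append _ _
    have h2 : wt (Fin.append x (fun i => ! x i)) = wt x + wt (fun i => ! x i) :=
      wt_append _ _
    have h3 : wt x + wt (fun i => ! x i) = k := by
      rw [wt_eq_sum, wt_eq_sum, ← Finset.sum_add_distrib]
      have : ∀ i : Fin k, ((if x i = true then 1 else 0) + (if (! x i) = true then 1 else 0)) = 1 := by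
        intro i; cases x i <;> simp
      simp only [this, Finset.sum_const, Finset.card_univ, smul_eq_mul, mul_one]
      simp
    rw [h1, h2, h3]
    have := hwt (phi x) (hrange x)
    omega
  have hdistg : ∀ x y, x ≠ y → d + 2 ≤ hammingDist (g x) (g y) := by
    intro x y hxy
    have h1 : hammingDist (g x) (g y)
        = hammingDist (Fin.append x (fun i => ! x i)) (Fin.append y (fun i => ! y i))
          + hammingDist (phi x) (phi y) := hammingDist_append _ _ _ _
    have h2 : hammingDist (Fin.append x (fun i => ! x i)) (Fin.append y (fun i => ! y i))
        = hammingDist x y + hammingDist (fun i => ! x i) (fun i => ! y i) :=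
      hammingDist_append _ _ _ _
    have h3 : hammingDist (fun i => ! x i) (fun i => ! y i) = hammingDist x y := by
      rw [hammingDist_eq_sum, hammingDist_eq_sum]
      apply Finset.sum_congr rfl
      intro i _
      cases x i <;> cases y i <;> simp
    have h4 : 1 ≤ hammingDist x y := by
      rwa [Nat.one_le_iff_ne_zero, ← Nat.pos_iff_ne_zero, hammingDist_pos]
    have h5 : d ≤ hammingDist (phi x) (phi y) :=
      hd _ (hrange x) _ (hrange y) (fun h => hxy (hphi h))
    omega
  have hmem : ∀ x, g x ∈ tripleCode phi := fun x => Finset.mem_image_of_mem _ (Finset.mem_univ x)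
  have hsys : Systematic (tripleCode phi) k := by
    refine ⟨Finset.univ.image (fun i : Fin k => Fin.castAdd n (Fin.castAdd k i)), ?_, ?_⟩
    · rw [Finset.card_image_of_injective, Finset.card_univ]
      · simp
      · intro a b h
        exact Fin.castAdd_injective _ _ (Fin.castAdd_injective _ _ h)
    · intro f
      refine ⟨g (fun i => f (Fin.castAdd n (Fin.castAdd k i))), ⟨hmem _, ?_⟩, ?_⟩
      · intro i hi
        simp only [Finset.mem_image, Finset.mem_univ, true_and] at hi
        obtain ⟨j, rfl⟩ := hi
        rw [hrec]
      · rintro z ⟨hz, hz2⟩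
        simp only [tripleCode, Finset.mem_image, Finset.mem_univ, true_and] at hz
        obtain ⟨x, rfl⟩ := hz
        have hx : x = fun i => f (Fin.castAdd n (Fin.castAdd k i)) := by
          funext i
          have := hz2 _ (Finset.mem_image_of_mem _ (Finset.mem_univ i))
          simpa [Fin.append_left] using this
        rw [hx]
  refine ⟨hcard, ?_, ?_, hsys, ?_⟩
  · intro y hy
    simp only [tripleCode, Finset.mem_image, Finset.mem_univ, true_and] at hy
    obtain ⟨x, rfl⟩ := hy
    exact hwtg x
  · intro y hy z hz hyz
    simp only [tripleCode, Finset.mem_image, Finset.mem_univ, true_and] at hy hz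
    obtain ⟨x, rfl⟩ := hy
    obtain ⟨x', rfl⟩ := hz
    exact hdistg x x' (fun h => hyz (by rw [h]))
  · apply le_csSup
    · refine ⟨2 ^ (k + k + n), ?_⟩
      rintro s ⟨k', rfl, C', hC', -⟩
      calc (2:ℕ) ^ k' = C'.card := hC'.symm
        _ ≤ Fintype.card (Fin (k + k + n) → Bool) := Finset.card_le_univ C'
        _ = 2 ^ (k + k + n) := by simp
    · refine ⟨k, rfl, tripleCode phi, hcard, hsys, ?_, ?_⟩
      · intro y hy
        simp only [tripleCode, Finset.mem_image, Finset.mem_univ, true_and] at hy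
        obtain ⟨x, rfl⟩ := hy
        exact hwtg x
      · intro y hy z hz hyz
        simp only [tripleCode, Finset.mem_image, Finset.mem_univ, true_and] at hy hz
        obtain ⟨x, rfl⟩ := hy
        obtain ⟨x', rfl⟩ := hz
        exact hdistg x x' (fun h => hyz (by rw [h]))
end

section
/- The pseudo-product construction: given a systematic binary constant-weight code C of length n, weight w, distance d1, size 2^{k1}, and a systematic binary code D of length m, distance d2, size 2^{k2}, there exists an MCWC(m,n,d1*d2,w) of size 2^{k1*k2}. Hence M(m,n,d1*d2,w) >= 2^{s(n,d1,w)*s(m,d2)}. -/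
open Finset

/-- Pseudo-product construction: from a systematic CWC`(n,d₁,w)` of size `2^{k₁}` and a
systematic `(m,d₂)` code of size `2^{k₂}` one obtains an MCWC`(m,n,d₁d₂,w)` of size
`2^{k₁k₂}`; hence `M(m,n,d₁d₂,w) ≥ 2^{k₁k₂}`. -/
theorem stmt4 (m n d1 d2 w k1 k2 : ℕ)
    (C : Finset (Fin n → Bool)) (hCcard : C.card = 2 ^ k1) (hCsys : Systematic C k1)
    (hCwt : ∀ x ∈ C, wt x = w)
    (hCd : ∀ x ∈ C, ∀ y ∈ C, x ≠ y → d1 ≤ hammingDist x y)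
    (D : Finset (Fin m → Bool)) (hDcard : D.card = 2 ^ k2) (hDsys : Systematic D k2)
    (hDd : ∀ x ∈ D, ∀ y ∈ D, x ≠ y → d2 ≤ hammingDist x y) :
    2 ^ (k1 * k2) ≤ M m n (d1 * d2) w := by
  classical
  obtain ⟨I, hIcard, hCu⟩ := hCsys
  obtain ⟨J, hJcard, hDu⟩ := hDsys
  choose encC hencC using fun f => (hCu f).exists
  choose encD hencD using fun f => (hDu f).exists
  have hCmem : ∀ f, encC f ∈ C := fun f => (hencC f).1
  have hCagr : ∀ f, ∀ i ∈ I, encC f i = f i := fun f => (hencC f).2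
  have hDmem : ∀ f, encD f ∈ D := fun f => (hencD f).1
  have hDagr : ∀ f, ∀ i ∈ J, encD f i = f i := fun f => (hencD f).2
  -- the encoder
  set Enc : (Fin m → Fin n → Bool) → (Fin m → Fin n → Bool) :=
    fun g i => encC (fun j => encD (fun i' => g i' j) i) with hEncDef
  have hEncRow : ∀ g i, Enc g i ∈ C := fun g i => hCmem _
  have hEncCol : ∀ g i, ∀ j ∈ I, Enc g i j = encD (fun i' => g i' j) i := by
    intro g i j hj
    exact hCagr _ j hj
  have hEncAgr : ∀ g, ∀ i ∈ J, ∀ j ∈ I, Enc g i j = g i j := by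
    intro g i hi j hj
    rw [hEncCol g i j hj]
    exact hDagr _ i hi
  -- the message set
  set S : Finset (Fin m → Fin n → Bool) :=
    Finset.univ.filter (fun g => ∀ i j, (i ∉ J ∨ j ∉ I) → g i j = false) with hSdef
  have hSmem : ∀ g, g ∈ S ↔ ∀ i j, (i ∉ J ∨ j ∉ I) → g i j = false := by
    intro g; simp [hSdef]
  have hScard : S.card = 2 ^ (k1 * k2) := by
    have := Finset.card_bij' (s := S) (t := (Finset.univ : Finset (↥J → ↥I → Bool)))
      (fun g _ => fun i j => g i j)
      (fun h _ => fun i j => if hi : i ∈ J then if hj : j ∈ I then h ⟨i, hi⟩ ⟨j, hj⟩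
        else false else false)
      (fun g hg => Finset.mem_univ _)
      (fun h _ => by
        rw [hSmem]
        intro i j hij
        rcases hij with hi | hj
        · simp [hi]
        · by_cases hi : i ∈ J <;> simp [hi, hj])
      (fun g hg => by
        funext i j
        by_cases hi : i ∈ J
        · by_cases hj : j ∈ I
          · simp [hi, hj]
          · simp [hi, hj, (hSmem g).1 hg i j (Or.inr hj)]
        · simp [hi, (hSmem g).1 hg i j (Or.inl hi)])
      (fun h _ => by
        funext i j
        simp [i.2, j.2])
    rw [this]
    rw [Finset.card_univ, Fintype.card_fun, Fintype.card_fun]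
    simp [Fintype.card_coe, hIcard, hJcard, Fintype.card_bool]
    rw [← pow_mul, mul_comm]
  -- injectivity of Enc on S
  have hEncInj : Set.InjOn Enc S := by
    intro g hg g' hg' h
    funext i j
    by_cases hi : i ∈ J
    · by_cases hj : j ∈ I
      · rw [← hEncAgr g i hi j hj, ← hEncAgr g' i hi j hj, h]
      · rw [(hSmem g).1 hg i j (Or.inr hj), (hSmem g').1 hg' i j (Or.inr hj)]
    · rw [(hSmem g).1 hg i j (Or.inl hi), (hSmem g').1 hg' i j (Or.inl hi)]
  set E : Finset (Fin m → Fin n → Bool) := S.image Enc with hEdef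
  have hEcard : E.card = 2 ^ (k1 * k2) := by
    rw [hEdef, Finset.card_image_of_injOn hEncInj, hScard]
  -- distance property
  have hdist : ∀ x ∈ E, ∀ y ∈ E, x ≠ y → d1 * d2 ≤ ∑ i, hammingDist (x i) (y i) := by
    intro x hx y hy hxy
    rw [hEdef, Finset.mem_image] at hx hy
    obtain ⟨g, hg, rfl⟩ := hx
    obtain ⟨g', hg', rfl⟩ := hy
    have hgg' : g ≠ g' := fun h => hxy (by rw [h])
    -- find a coordinate in J × I where g and g' differ
    have : ∃ i0 j0, i0 ∈ J ∧ j0 ∈ I ∧ g i0 j0 ≠ g' i0 j0 := by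
      by_contra hcon
      push_neg at hcon
      apply hgg'
      funext i j
      by_cases hi : i ∈ J
      · by_cases hj : j ∈ I
        · exact hcon i j hi hj
        · rw [(hSmem g).1 hg i j (Or.inr hj), (hSmem g').1 hg' i j (Or.inr hj)]
      · rw [(hSmem g).1 hg i j (Or.inl hi), (hSmem g').1 hg' i j (Or.inl hi)]
    obtain ⟨i0, j0, hi0, hj0, hne⟩ := this
    set cX : Fin m → Bool := encD (fun i' => g i' j0) with hcX
    set cY : Fin m → Bool := encD (fun i' => g' i' j0) with hcY
    have hcXY : cX ≠ cY := by
      intro h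
      apply hne
      rw [← hDagr (fun i' => g i' j0) i0 hi0, ← hDagr (fun i' => g' i' j0) i0 hi0,
        ← hcX, ← hcY, h]
    have hd2 : d2 ≤ hammingDist cX cY := hDd cX (hDmem _) cY (hDmem _) hcXY
    set T : Finset (Fin m) := Finset.univ.filter (fun i => cX i ≠ cY i) with hT
    have hTcard : hammingDist cX cY = T.card := rfl
    have hrow : ∀ i ∈ T, d1 ≤ hammingDist (Enc g i) (Enc g' i) := by
      intro i hi
      rw [hT, Finset.mem_filter] at hi
      apply hCd _ (hEncRow g i) _ (hEncRow g' i)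
      intro h
      apply hi.2
      show encD (fun i' => g i' j0) i = encD (fun i' => g' i' j0) i
      rw [← hEncCol g i j0 hj0, ← hEncCol g' i j0 hj0, h]
    calc d1 * d2 ≤ d1 * T.card := by
          apply Nat.mul_le_mul_left
          rw [← hTcard]; exact hd2
      _ = ∑ _i ∈ T, d1 := by rw [Finset.sum_const, smul_eq_mul, mul_comm]
      _ ≤ ∑ i ∈ T, hammingDist (Enc g i) (Enc g' i) := Finset.sum_le_sum hrow
      _ ≤ ∑ i, hammingDist (Enc g i) (Enc g' i) :=
          Finset.sum_le_sum_of_subset (Finset.subset_univ T)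
  -- weight property
  have hwtE : ∀ x ∈ E, ∀ i, wt (x i) = w := by
    intro x hx i
    rw [hEdef, Finset.mem_image] at hx
    obtain ⟨g, hg, rfl⟩ := hx
    exact hCwt _ (hEncRow g i)
  -- conclude
  have hmem : 2 ^ (k1 * k2) ∈ {s | ∃ C : Finset (Fin m → Fin n → Bool), C.card = s ∧
      (∀ x ∈ C, ∀ i, wt (x i) = w) ∧
      ∀ x ∈ C, ∀ y ∈ C, x ≠ y → d1 * d2 ≤ ∑ i, hammingDist (x i) (y i)} :=
    ⟨E, hEcard, hwtE, hdist⟩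
  have hbdd : BddAbove {s | ∃ C : Finset (Fin m → Fin n → Bool), C.card = s ∧
      (∀ x ∈ C, ∀ i, wt (x i) = w) ∧
      ∀ x ∈ C, ∀ y ∈ C, x ≠ y → d1 * d2 ≤ ∑ i, hammingDist (x i) (y i)} := by
    refine ⟨Fintype.card (Fin m → Fin n → Bool), ?_⟩
    rintro s ⟨F, hF, -, -⟩
    rw [← hF]
    exact Finset.card_le_univ F
  exact le_csSup hbdd hmem
end

section
/- Let X be an alphabet of size q and phi: X -> {0,1}^q send x to its characteristic (indicator) vector. For any q-ary code of length mw with minimum distance d, replacing each symbol by its indicator vector yields a binary code of length qmw in which each of the m consecutive blocks of length qw has weight exactly w, with minimum distance at least 2d. Hence M(m,qw,2d,w) >= A_q(mw,d). -/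
open Finset

namespace Stmt5Aux

variable {m w q : ℕ}

/-- indicator expansion -/
def expand (m w q : ℕ) (x : Fin (m * w) → Fin q) : Fin m → Fin (q * w) → Bool :=
  fun i k =>
    decide (x (finProdFinEquiv (i, (finProdFinEquiv.symm k : Fin q × Fin w).2))
      = (finProdFinEquiv.symm k : Fin q × Fin w).1)

lemma expand_apply (x : Fin (m * w) → Fin q) (i : Fin m) (a : Fin q) (j : Fin w) :
    expand m w q x i (finProdFinEquiv (a, j)) = decide (x (finProdFinEquiv (i, j)) = a) := by
  simp [expand]

lemma expand_injective : Function.Injective (expand m w q) := by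
  intro x y h
  funext p
  obtain ⟨⟨i, j⟩, rfl⟩ := finProdFinEquiv.surjective p
  have h1 := congrFun (congrFun h i) (finProdFinEquiv (x (finProdFinEquiv (i, j)), j))
  rw [expand_apply, expand_apply] at h1
  simp at h1
  exact h1.symm

lemma wt_expand (x : Fin (m * w) → Fin q) (i : Fin m) : wt (expand m w q x i) = w := by
  unfold wt
  rw [Finset.card_filter]
  rw [← Equiv.sum_comp (finProdFinEquiv : Fin q × Fin w ≃ Fin (q * w))
    (fun k => if expand m w q x i k = true then 1 else 0)]
  rw [Fintype.sum_prod_type_right]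
  have : ∀ j : Fin w,
      (∑ a : Fin q, if expand m w q x i (finProdFinEquiv (a, j)) = true then 1 else 0) = 1 := by
    intro j
    simp only [expand_apply, decide_eq_true_eq]
    rw [Finset.sum_ite_eq univ (x (finProdFinEquiv (i, j))) (fun _ => 1)]
    simp
  simp only [this]
  simp [Finset.card_univ]

lemma inner_sum (b c : Fin q) :
    (∑ a : Fin q, if (decide (b = a) ≠ decide (c = a)) then 1 else 0)
      = if b = c then 0 else 2 := by
  by_cases h : b = c
  · simp [h]
  · rw [if_neg h, ← Finset.card_filter]
    have hset : (univ.filter fun a : Fin q => decide (b = a) ≠ decide (c = a)) = {b, c} := by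
      ext a
      simp only [mem_filter, mem_univ, true_and, mem_insert, mem_singleton, ne_eq,
        decide_eq_decide]
      by_cases h1 : a = b <;> by_cases h2 : a = c <;>
        simp [h1, h2, h, eq_comm] <;> tauto
    rw [hset, Finset.card_pair h]

lemma dist_expand (x y : Fin (m * w) → Fin q) :
    ∑ i, hammingDist (expand m w q x i) (expand m w q y i) = 2 * hammingDist x y := by
  have hblock : ∀ i : Fin m, hammingDist (expand m w q x i) (expand m w q y i)
      = ∑ j : Fin w, if x (finProdFinEquiv (i, j)) = y (finProdFinEquiv (i, j)) then 0 else 2 := by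
    intro i
    rw [hammingDist, Finset.card_filter]
    rw [← Equiv.sum_comp (finProdFinEquiv : Fin q × Fin w ≃ Fin (q * w))
      (fun k => if expand m w q x i k ≠ expand m w q y i k then 1 else 0)]
    rw [Fintype.sum_prod_type_right]
    refine Finset.sum_congr rfl fun j _ => ?_
    simp only [expand_apply]
    exact inner_sum _ _
  simp only [hblock]
  have hrhs : (2 : ℕ) * hammingDist x y = ∑ p, if x p = y p then 0 else 2 := by
    rw [hammingDist, Finset.card_filter, Finset.mul_sum]
    refine Finset.sum_congr rfl fun p _ => ?_
    by_cases h : x p = y p <;> simp [h]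
  rw [hrhs, ← Equiv.sum_comp (finProdFinEquiv : Fin m × Fin w ≃ Fin (m * w))
    (fun p => if x p = y p then 0 else 2), Fintype.sum_prod_type]

end Stmt5Aux

open Stmt5Aux

/-- Indicator-vector expansion: any `q`-ary code of length `mw` and distance `d` yields, by
replacing each symbol with its indicator vector in `{0,1}^q`, a binary code whose `m` blocks of
length `qw` each have weight exactly `w`, with distance at least `2d`;
hence `M(m,qw,2d,w) ≥ A_q(mw,d)`. -/
theorem stmt5 (m w q d : ℕ) :
    (∀ C : Finset (Fin (m * w) → Fin q),
      (∀ x ∈ C, ∀ y ∈ C, x ≠ y → d ≤ hammingDist x y) →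
      ∃ E : Finset (Fin m → Fin (q * w) → Bool),
        E.card = C.card ∧ (∀ x ∈ E, ∀ i, wt (x i) = w) ∧
        ∀ x ∈ E, ∀ y ∈ E, x ≠ y → 2 * d ≤ ∑ i, hammingDist (x i) (y i)) ∧
    Aq q (m * w) d ≤ M m (q * w) (2 * d) w := by
  have main : ∀ C : Finset (Fin (m * w) → Fin q),
      (∀ x ∈ C, ∀ y ∈ C, x ≠ y → d ≤ hammingDist x y) →
      ∃ E : Finset (Fin m → Fin (q * w) → Bool),
        E.card = C.card ∧ (∀ x ∈ E, ∀ i, wt (x i) = w) ∧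
        ∀ x ∈ E, ∀ y ∈ E, x ≠ y → 2 * d ≤ ∑ i, hammingDist (x i) (y i) := by
    intro C hC
    refine ⟨C.image (expand m w q), Finset.card_image_of_injective C expand_injective, ?_, ?_⟩
    · rintro x hx i
      obtain ⟨x', _, rfl⟩ := Finset.mem_image.mp hx
      exact wt_expand x' i
    · rintro x hx y hy hxy
      obtain ⟨x', hx', rfl⟩ := Finset.mem_image.mp hx
      obtain ⟨y', hy', rfl⟩ := Finset.mem_image.mp hy
      have hne : x' ≠ y' := fun h => hxy (by rw [h])
      rw [dist_expand]
      exact Nat.mul_le_mul_left 2 (hC x' hx' y' hy' hne)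
  refine ⟨main, ?_⟩
  unfold Aq M
  have hne : {s | ∃ C : Finset (Fin (m * w) → Fin q), C.card = s ∧
      ∀ x ∈ C, ∀ y ∈ C, x ≠ y → d ≤ hammingDist x y}.Nonempty :=
    ⟨0, ∅, by simp⟩
  refine csSup_le hne ?_
  rintro s ⟨C, rfl, hC⟩
  obtain ⟨E, hcard, hwt, hdist⟩ := main C hC
  refine le_csSup ?_ ⟨E, hcard, hwt, hdist⟩
  refine ⟨Fintype.card (Fin m → Fin (q * w) → Bool), ?_⟩
  rintro t ⟨D, rfl, -⟩
  simpa using Finset.card_le_univ D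
end

section
/- If there exists a resolvable t-(v,k,1) design, then M(v/k, v, 2(k-t+1)*(v/k), k) >= k*binom(v,t)/(v*binom(k,t)); i.e., assigning to each parallel class the (v/k)-by-v binary matrix whose rows are the indicator vectors of its blocks produces a multiply constant-weight code with row weight k and minimum distance 2(v/k)(k-t+1), of size equal to the number of parallel classes. -/
open Finset

lemma wt_ind {n : ℕ} (b : Finset (Fin n)) : wt (fun j => decide (j ∈ b)) = b.card := by
  simp [wt]

lemma hd_ind {n : ℕ} (b c : Finset (Fin n)) :
    hammingDist (fun j => decide (j ∈ b)) (fun j => decide (j ∈ c))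
      = (b \ c).card + (c \ b).card := by
  rw [hammingDist, ← Finset.card_union_of_disjoint (disjoint_sdiff_sdiff)]
  congr 1
  ext j
  by_cases hb : j ∈ b <;> by_cases hc : j ∈ c <;> simp [hb, hc]

lemma ind_inj {n : ℕ} (b c : Finset (Fin n))
    (h : (fun j => decide (j ∈ b)) = (fun j => decide (j ∈ c))) : b = c := by
  ext j
  have := congrFun h j
  simpa using this

noncomputable def matOf (v k : ℕ) (P : Finset (Finset (Fin v))) : Fin (v/k) → Fin v → Bool :=
  fun i j => if h : P.card = v / k then
    decide (j ∈ ((P.equivFin.symm (Fin.cast h.symm i) : P) : Finset (Fin v))) else false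

lemma matOf_row (v k : ℕ) (P : Finset (Finset (Fin v))) (h : P.card = v/k) (i : Fin (v/k)) :
    ∃ b ∈ P, matOf v k P i = fun j => decide (j ∈ b) := by
  refine ⟨_, (P.equivFin.symm (Fin.cast h.symm i)).2, ?_⟩
  funext j
  simp only [matOf, dif_pos h]

/-- Resolvable design construction: a resolvable `t`-`(v,k,1)` design (blocks `B` of size `k`,
every `t`-set in exactly one block, blocks partitioned into parallel classes each of which
partitions the point set) yields
`M(v/k, v, 2(k-t+1)(v/k), k) ≥ k·C(v,t)/(v·C(k,t))`, the number of parallel classes. -/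
theorem stmt7 (v k t : ℕ) (ht : 0 < t) (htk : t ≤ k) (hkv : k ≤ v)
    (B : Finset (Finset (Fin v)))
    (hblk : ∀ b ∈ B, b.card = k)
    (hdes : ∀ T : Finset (Fin v), T.card = t → ∃! b, b ∈ B ∧ T ⊆ b)
    (classes : Finset (Finset (Finset (Fin v))))
    (hcover : ∀ b ∈ B, ∃! P, P ∈ classes ∧ b ∈ P)
    (hsub : ∀ P ∈ classes, ∀ b ∈ P, b ∈ B)
    (hpar : ∀ P ∈ classes, ∀ x : Fin v, ∃! b, b ∈ P ∧ x ∈ b) :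
    k * Nat.choose v t / (v * Nat.choose k t) ≤
      M (v / k) v (2 * (k - t + 1) * (v / k)) k := by
  classical
  have hk0 : 0 < k := lt_of_lt_of_le ht htk
  have hv0 : 0 < v := lt_of_lt_of_le hk0 hkv
  have hvk1 : 1 ≤ v / k := (Nat.one_le_div_iff hk0).2 hkv
  -- distinct blocks meet in fewer than t points
  have hint : ∀ b ∈ B, ∀ c ∈ B, b ≠ c → (b ∩ c).card + 1 ≤ t := by
    intro b hb c hc hbc
    by_contra hcon
    push_neg at hcon
    have htle : t ≤ (b ∩ c).card := by omega
    obtain ⟨T, hTsub, hTcard⟩ := Finset.exists_subset_card_eq (s := b ∩ c) htle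
    obtain ⟨d, _, hduniq⟩ := hdes T hTcard
    have hbd : b = d := hduniq b ⟨hb, hTsub.trans (Finset.inter_subset_left)⟩
    have hcd : c = d := hduniq c ⟨hc, hTsub.trans (Finset.inter_subset_right)⟩
    exact hbc (hbd.trans hcd.symm)
  -- row distance bound
  have hdist : ∀ b ∈ B, ∀ c ∈ B, b ≠ c →
      2 * (k - t + 1) ≤ hammingDist (fun j => decide (j ∈ b)) (fun j => decide (j ∈ c)) := by
    intro b hb c hc hbc
    rw [hd_ind]
    have h1 : (b \ c).card + (b ∩ c).card = b.card := Finset.card_sdiff_add_card_inter b c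
    have h2 : (c \ b).card + (c ∩ b).card = c.card := Finset.card_sdiff_add_card_inter c b
    rw [Finset.inter_comm c b] at h2
    have h3 := hint b hb c hc hbc
    have h4 := hblk b hb
    have h5 := hblk c hc
    omega
  -- each parallel class has v/k blocks
  have hPcard : ∀ P ∈ classes, P.card * k = v := by
    intro P hP
    have hmap : ∀ x : Fin v, x ∈ (Finset.univ : Finset (Fin v)) →
        Finset.choose (fun b => x ∈ b) P (hpar P hP x) ∈ P := fun x _ =>
      Finset.choose_mem _ _ _
    have hfib := Finset.card_eq_sum_card_fiberwise hmap
    have hfe : ∀ b ∈ P, (Finset.univ.filter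
        fun x => Finset.choose (fun b => x ∈ b) P (hpar P hP x) = b) = b := by
      intro b hb
      ext x
      simp only [Finset.mem_filter, Finset.mem_univ, true_and]
      constructor
      · rintro rfl
        exact Finset.choose_property (fun b => x ∈ b) P (hpar P hP x)
      · intro hx
        exact (hpar P hP x).unique
          ⟨Finset.choose_mem _ _ _, Finset.choose_property (fun b => x ∈ b) P (hpar P hP x)⟩
          ⟨hb, hx⟩
    rw [Finset.sum_congr rfl fun b hb => congrArg Finset.card (hfe b hb)] at hfib
    rw [Finset.sum_congr rfl fun b hb => hblk b (hsub P hP b hb),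
      Finset.sum_const, smul_eq_mul] at hfib
    simpa [Finset.card_univ] using hfib.symm
  have hPvk : ∀ P ∈ classes, P.card = v / k := by
    intro P hP
    exact (Nat.div_eq_of_eq_mul_left hk0 (hPcard P hP).symm).symm
  -- classes is nonempty
  obtain ⟨T0, _, hT0⟩ := Finset.exists_subset_card_eq (s := (Finset.univ : Finset (Fin v))) (n := t)
    (by simpa using le_trans htk hkv)
  obtain ⟨b0, ⟨hb0B, _⟩, _⟩ := hdes T0 hT0
  obtain ⟨P0, ⟨hP0, _⟩, _⟩ := hcover b0 hb0B
  have hkdvd : k ∣ v := ⟨P0.card, by rw [mul_comm]; exact (hPcard P0 hP0).symm⟩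
  -- B.card = classes.card * (v/k)
  let cls : Finset (Fin v) → Finset (Finset (Fin v)) := fun b =>
    if hb : b ∈ B then Finset.choose (fun P => b ∈ P) classes (hcover b hb) else ∅
  have hBcard : B.card = classes.card * (v / k) := by
    have hmap : ∀ b ∈ B, cls b ∈ classes := by
      intro b hb
      simp only [cls, dif_pos hb]
      exact Finset.choose_mem _ _ _
    have hfib := Finset.card_eq_sum_card_fiberwise hmap
    have hfe : ∀ P ∈ classes, (B.filter fun b => cls b = P) = P := by
      intro P hP
      ext b
      simp only [Finset.mem_filter]
      constructor
      · rintro ⟨hb, rfl⟩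
        simp only [cls, dif_pos hb]
        exact Finset.choose_property (fun P => b ∈ P) classes (hcover b hb)
      · intro hb
        have hbB : b ∈ B := hsub P hP b hb
        refine ⟨hbB, ?_⟩
        simp only [cls, dif_pos hbB]
        exact (hcover b hbB).unique
          ⟨Finset.choose_mem _ _ _, Finset.choose_property (fun P => b ∈ P) classes (hcover b hbB)⟩
          ⟨hP, hb⟩
    rw [Finset.sum_congr rfl fun P hP => congrArg Finset.card (hfe P hP)] at hfib
    rw [hfib, Finset.sum_congr rfl hPvk, Finset.sum_const, smul_eq_mul]
  -- C(v,t) = B.card * C(k,t)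
  let blk : Finset (Fin v) → Finset (Fin v) := fun T =>
    if h : T.card = t then Finset.choose (fun b => T ⊆ b) B (hdes T h) else ∅
  have hCount : Nat.choose v t = B.card * Nat.choose k t := by
    have hmap : ∀ T ∈ Finset.powersetCard t (Finset.univ : Finset (Fin v)), blk T ∈ B := by
      intro T hT
      have hTt : T.card = t := (Finset.mem_powersetCard.1 hT).2
      simp only [blk, dif_pos hTt]
      exact Finset.choose_mem _ _ _
    have hfib := Finset.card_eq_sum_card_fiberwise hmap
    have hfe : ∀ b ∈ B,
        ((Finset.powersetCard t (Finset.univ : Finset (Fin v))).filter fun T => blk T = b)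
          = b.powersetCard t := by
      intro b hb
      ext T
      simp only [Finset.mem_filter, Finset.mem_powersetCard]
      constructor
      · rintro ⟨⟨-, hTt⟩, rfl⟩
        simp only [blk, dif_pos hTt]
        exact ⟨Finset.choose_property (fun b => T ⊆ b) B (hdes T hTt), hTt⟩
      · rintro ⟨hTb, hTt⟩
        refine ⟨⟨Finset.subset_univ T, hTt⟩, ?_⟩
        simp only [blk, dif_pos hTt]
        exact (hdes T hTt).unique
          ⟨Finset.choose_mem _ _ _, Finset.choose_property (fun b => T ⊆ b) B (hdes T hTt)⟩
          ⟨hb, hTb⟩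
    rw [Finset.sum_congr rfl fun b hb => congrArg Finset.card (hfe b hb)] at hfib
    have hfe2 : ∀ b ∈ B, (b.powersetCard t).card = Nat.choose k t := by
      intro b hb
      rw [Finset.card_powersetCard, hblk b hb]
    rw [Finset.sum_congr rfl hfe2, Finset.sum_const, smul_eq_mul] at hfib
    simpa [Finset.card_powersetCard, Finset.card_univ] using hfib
  -- the LHS equals the number of classes
  have hLHS : k * Nat.choose v t / (v * Nat.choose k t) = classes.card := by
    have hkey : k * Nat.choose v t = v * Nat.choose k t * classes.card := by
      rw [hCount, hBcard]
      have hvk : k * (v / k) = v := Nat.mul_div_cancel' hkdvd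
      calc k * (classes.card * (v / k) * Nat.choose k t)
          = (k * (v / k)) * Nat.choose k t * classes.card := by ring
        _ = v * Nat.choose k t * classes.card := by rw [hvk]
    rw [hkey, Nat.mul_div_cancel_left]
    exact Nat.mul_pos hv0 (Nat.choose_pos htk)
  rw [hLHS]
  -- build the code
  set mvk := v / k with hmvk
  have hinjOn : Set.InjOn (matOf v k) classes := by
    intro P hP Q hQ hPQ
    by_contra hne
    obtain ⟨b, hbP, hbrow⟩ := matOf_row v k P (hPvk P hP) ⟨0, hvk1⟩
    obtain ⟨c, hcQ, hcrow⟩ := matOf_row v k Q (hPvk Q hQ) ⟨0, hvk1⟩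
    have : b = c := ind_inj b c (by rw [← hbrow, ← hcrow, hPQ])
    subst this
    exact hne ((hcover b (hsub P hP b hbP)).unique ⟨hP, hbP⟩ ⟨hQ, hcQ⟩)
  have hmem : classes.card ∈ {s | ∃ C : Finset (Fin (v/k) → Fin v → Bool), C.card = s ∧
      (∀ x ∈ C, ∀ i, wt (x i) = k) ∧
      ∀ x ∈ C, ∀ y ∈ C, x ≠ y → 2 * (k - t + 1) * (v / k) ≤ ∑ i, hammingDist (x i) (y i)} := by
    refine ⟨classes.image (matOf v k), Finset.card_image_of_injOn hinjOn, ?_, ?_⟩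
    · intro x hx i
      obtain ⟨P, hP, rfl⟩ := Finset.mem_image.1 hx
      obtain ⟨b, hbP, hbrow⟩ := matOf_row v k P (hPvk P hP) i
      rw [hbrow, wt_ind]
      exact hblk b (hsub P hP b hbP)
    · intro x hx y hy hxy
      obtain ⟨P, hP, rfl⟩ := Finset.mem_image.1 hx
      obtain ⟨Q, hQ, rfl⟩ := Finset.mem_image.1 hy
      have hPQ : P ≠ Q := fun h => hxy (by rw [h])
      have hrowbd : ∀ i : Fin (v/k),
          2 * (k - t + 1) ≤ hammingDist (matOf v k P i) (matOf v k Q i) := by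
        intro i
        obtain ⟨b, hbP, hbrow⟩ := matOf_row v k P (hPvk P hP) i
        obtain ⟨c, hcQ, hcrow⟩ := matOf_row v k Q (hPvk Q hQ) i
        rw [hbrow, hcrow]
        have hbc : b ≠ c := by
          rintro rfl
          exact hPQ ((hcover b (hsub P hP b hbP)).unique ⟨hP, hbP⟩ ⟨hQ, hcQ⟩)
        exact hdist b (hsub P hP b hbP) c (hsub Q hQ c hcQ) hbc
      calc 2 * (k - t + 1) * (v / k)
          = ∑ _i : Fin (v/k), 2 * (k - t + 1) := by
            rw [Finset.sum_const, Finset.card_univ, Fintype.card_fin, smul_eq_mul, mul_comm]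
        _ ≤ ∑ i, hammingDist (matOf v k P i) (matOf v k Q i) :=
            Finset.sum_le_sum fun i _ => hrowbd i
  have hbdd : BddAbove {s | ∃ C : Finset (Fin (v/k) → Fin v → Bool), C.card = s ∧
      (∀ x ∈ C, ∀ i, wt (x i) = k) ∧
      ∀ x ∈ C, ∀ y ∈ C, x ≠ y → 2 * (k - t + 1) * (v / k) ≤ ∑ i, hammingDist (x i) (y i)} := by
    refine ⟨Fintype.card (Fin (v/k) → Fin v → Bool), ?_⟩
    rintro s ⟨C, rfl, -, -⟩
    simpa using Finset.card_le_univ C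
  exact le_csSup hbdd hmem
end

section
/- Johnson-type bound for doubly/multiply constant-weight codes: T(w_1,n_1; ...; w_m,n_m; d) <= floor( (n_i / w_i) * T(w_1,n_1; ...; w_i - 1, n_i - 1; ...; w_m,n_m; d) ) for each index i with w_i >= 1. -/
open Finset

/-- `T m n w d`: max size of a binary code with `m` blocks, the `i`-th of length `n i`, in which
every codeword has weight exactly `w i` on block `i`, with minimum (total) Hamming distance `d`. -/
noncomputable def T (m : ℕ) (n w : Fin m → ℕ) (d : ℕ) : ℕ :=
  sSup {s | ∃ C : Finset ((i : Fin m) → Fin (n i) → Bool), C.card = s ∧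
    (∀ x ∈ C, ∀ i, wt (x i) = w i) ∧
    ∀ x ∈ C, ∀ y ∈ C, x ≠ y → d ≤ ∑ i, hammingDist (x i) (y i)}

section Aux

variable {m : ℕ} (n : Fin m → ℕ) (i : Fin m) (j : Fin (n i))

/-- coordinate map from the shortened index set into the original one,
skipping position `j` in block `i`. -/
def gmap (k : Fin m) (q : Fin (Function.update n i (n i - 1) k)) : Fin (n k) :=
  ⟨if k = i ∧ j.val ≤ q.val then q.val + 1 else q.val, by
    have hq := q.isLt
    by_cases hk : k = i
    · have e : Function.update n i (n i - 1) k = n i - 1 := by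
        rw [hk, Function.update_self]
      have hq' : q.val < n i - 1 := lt_of_lt_of_le hq e.le
      have hj := j.isLt
      have hk' : n k = n i := by rw [hk]
      rw [hk']
      split <;> omega
    · have e : Function.update n i (n i - 1) k = n k := Function.update_of_ne hk _ _
      have hq' : q.val < n k := lt_of_lt_of_le hq e.le
      simp only [hk, false_and, if_false]
      exact hq'⟩

theorem gmap_val_ne (k : Fin m) (hk : k ≠ i) (q) : (gmap n i j k q).val = q.val := by
  simp [gmap, hk]

theorem gmap_i_val (q) : (gmap n i j i q).val =
    if j.val ≤ q.val then q.val + 1 else q.val := by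
  simp [gmap]

theorem gmap_inj (k : Fin m) : Function.Injective (gmap n i j k) := by
  intro a b hab
  have h := congrArg Fin.val hab
  apply Fin.ext
  by_cases hk : k = i
  · subst hk
    rw [gmap_i_val, gmap_i_val] at h
    split at h <;> split at h <;> omega
  · rwa [gmap_val_ne n i j k hk, gmap_val_ne n i j k hk] at h

theorem gmap_i_ne (q) : gmap n i j i q ≠ j := by
  intro h
  have h := congrArg Fin.val h
  rw [gmap_i_val] at h
  split at h <;> omega

theorem gmap_surj (k : Fin m) (hk : k ≠ i) (r : Fin (n k)) :
    ∃ q, gmap n i j k q = r :=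
  ⟨⟨r.val, by rw [Function.update_of_ne hk]; exact r.isLt⟩,
    Fin.ext (by rw [gmap_val_ne n i j k hk])⟩

theorem gmap_i_surj (r : Fin (n i)) (hr : r ≠ j) : ∃ q, gmap n i j i q = r := by
  have hrj : r.val ≠ j.val := fun h => hr (Fin.ext h)
  have hjlt := j.isLt
  have hrlt := r.isLt
  by_cases h : r.val < j.val
  · have hb : r.val < Function.update n i (n i - 1) i := by
      rw [Function.update_self]; omega
    refine ⟨⟨r.val, hb⟩, Fin.ext ?_⟩
    rw [gmap_i_val]
    show (if j.val ≤ r.val then r.val + 1 else r.val) = r.val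
    rw [if_neg (by omega)]
  · have hb : r.val - 1 < Function.update n i (n i - 1) i := by
      rw [Function.update_self]; omega
    refine ⟨⟨r.val - 1, hb⟩, Fin.ext ?_⟩
    rw [gmap_i_val]
    show (if j.val ≤ r.val - 1 then r.val - 1 + 1 else r.val - 1) = r.val
    rw [if_pos (by omega)]
    omega

theorem card_comp_ne (k : Fin m) (hk : k ≠ i) (P : Fin (n k) → Prop) [DecidablePred P] :
    (univ.filter fun q => P (gmap n i j k q)).card = (univ.filter P).card := by
  apply Finset.card_bij (fun q _ => gmap n i j k q)
  · intro a ha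
    simp only [mem_filter, mem_univ, true_and] at ha ⊢
    exact ha
  · intro a _ b _ h
    exact gmap_inj n i j k h
  · intro r hr
    simp only [mem_filter, mem_univ, true_and] at hr
    obtain ⟨q, hq⟩ := gmap_surj n i j k hk r
    exact ⟨q, by simp only [mem_filter, mem_univ, true_and, hq]; exact hr, hq⟩

theorem card_comp_i (P : Fin (n i) → Prop) [DecidablePred P] :
    (univ.filter fun q => P (gmap n i j i q)).card
      = (univ.filter fun r => P r ∧ r ≠ j).card := by
  apply Finset.card_bij (fun q _ => gmap n i j i q)
  · intro a ha
    simp only [mem_filter, mem_univ, true_and] at ha ⊢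
    exact ⟨ha, gmap_i_ne n i j a⟩
  · intro a _ b _ h
    exact gmap_inj n i j i h
  · intro r hr
    simp only [mem_filter, mem_univ, true_and] at hr
    obtain ⟨q, hq⟩ := gmap_i_surj n i j r hr.2
    exact ⟨q, by simp only [mem_filter, mem_univ, true_and, hq]; exact hr.1, hq⟩

end Aux

/-- Johnson-type bound:
`T(…; wᵢ, nᵢ; …; d) ≤ ⌊(nᵢ/wᵢ)·T(…; wᵢ-1, nᵢ-1; …; d)⌋` whenever `wᵢ ≥ 1`. -/
theorem stmt9 (m : ℕ) (n w : Fin m → ℕ) (d : ℕ) (i : Fin m) (hw : 1 ≤ w i) :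
    T m n w d ≤
      n i * T m (Function.update n i (n i - 1)) (Function.update w i (w i - 1)) d / w i := by
  refine csSup_le ⟨0, ∅, by simp⟩ ?_
  rintro s ⟨C, rfl, hwt, hdist⟩
  rcases C.eq_empty_or_nonempty with rfl | ⟨x0, hx0⟩
  · simp
  have hni : 1 ≤ n i := by
    have h1 := hwt x0 hx0 i
    have h2 : wt (x0 i) ≤ n i := by
      unfold wt
      calc (univ.filter fun q => x0 i q = true).card
          ≤ (univ : Finset (Fin (n i))).card := Finset.card_filter_le _ _
        _ = n i := by simp
    omega
  rw [Nat.le_div_iff_mul_le hw]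
  -- double counting
  have hsum : ∑ j : Fin (n i), (C.filter fun x => x i j = true).card = C.card * w i := by
    calc ∑ j : Fin (n i), (C.filter fun x => x i j = true).card
        = ∑ j : Fin (n i), ∑ x ∈ C, if x i j = true then 1 else 0 := by
          refine Finset.sum_congr rfl fun j _ => ?_
          exact Finset.card_filter _ _
      _ = ∑ x ∈ C, ∑ j : Fin (n i), if x i j = true then 1 else 0 := Finset.sum_comm
      _ = ∑ x ∈ C, wt (x i) := by
          refine Finset.sum_congr rfl fun x _ => ?_
          exact (Finset.card_filter _ _).symm
      _ = ∑ x ∈ C, w i := Finset.sum_congr rfl fun x hx => hwt x hx i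
      _ = C.card * w i := by rw [Finset.sum_const, smul_eq_mul]
  have hne : (univ : Finset (Fin (n i))).Nonempty := ⟨⟨0, hni⟩, Finset.mem_univ _⟩
  obtain ⟨j, -, hj⟩ := Finset.exists_le_of_sum_le (f := fun _ : Fin (n i) => C.card * w i)
    (g := fun j => n i * (C.filter fun x => x i j = true).card) hne
    (by rw [Finset.sum_const, ← Finset.mul_sum, hsum, Finset.card_univ, Fintype.card_fin,
      smul_eq_mul])
  set Cj := C.filter fun x => x i j = true with hCj
  set F : ((k : Fin m) → Fin (n k) → Bool) →
      ((k : Fin m) → Fin (Function.update n i (n i - 1) k) → Bool) :=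
    fun x k q => x k (gmap n i j k q) with hF
  have hmemCj : ∀ x ∈ Cj, x ∈ C ∧ x i j = true := by
    intro x hx
    simpa [hCj, Finset.mem_filter] using hx
  have key : Cj.card ≤ T m (Function.update n i (n i - 1)) (Function.update w i (w i - 1)) d := by
    apply le_csSup
    · refine ⟨Fintype.card ((k : Fin m) → Fin (Function.update n i (n i - 1) k) → Bool), ?_⟩
      rintro t ⟨D, rfl, -, -⟩
      simpa using Finset.card_le_univ D
    · have hinj : Set.InjOn F Cj := by
        intro x hx y hy hxy
        obtain ⟨hxC, hxj⟩ := hmemCj x hx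
        obtain ⟨hyC, hyj⟩ := hmemCj y hy
        funext k r
        by_cases hk : k = i
        · subst hk
          by_cases hr : r = j
          · rw [hr, hxj, hyj]
          · obtain ⟨q, hq⟩ := gmap_i_surj n k j r hr
            have := congrFun (congrFun hxy k) q
            simpa [hF, hq] using this
        · obtain ⟨q, hq⟩ := gmap_surj n i j k hk r
          have := congrFun (congrFun hxy k) q
          simpa [hF, hq] using this
      refine ⟨Cj.image F, Finset.card_image_of_injOn hinj, ?_, ?_⟩
      · -- weights
        intro z hz k
        obtain ⟨x, hx, rfl⟩ := Finset.mem_image.mp hz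
        obtain ⟨hxC, hxj⟩ := hmemCj x hx
        by_cases hk : k = i
        · subst hk
          show (univ.filter fun q => x k (gmap n k j k q) = true).card = _
          rw [card_comp_i n k j (P := fun r => x k r = true),
            Function.update_self]
          have hset : (univ.filter fun r => x k r = true ∧ r ≠ j)
              = (univ.filter fun r => x k r = true).erase j := by
            ext r
            simp only [Finset.mem_filter, Finset.mem_erase, Finset.mem_univ, true_and]
            tauto
          rw [hset, Finset.card_erase_of_mem (by simp [hxj])]
          have := hwt x hxC k
          unfold wt at this
          rw [this]
        · show (univ.filter fun q => x k (gmap n i j k q) = true).card = _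
          rw [card_comp_ne n i j k hk (P := fun r => x k r = true),
            Function.update_of_ne hk]
          exact hwt x hxC k
      · -- distance
        intro z hz z' hz' hzz'
        obtain ⟨x, hx, rfl⟩ := Finset.mem_image.mp hz
        obtain ⟨x', hx', rfl⟩ := Finset.mem_image.mp hz'
        obtain ⟨hxC, hxj⟩ := hmemCj x hx
        obtain ⟨hx'C, hx'j⟩ := hmemCj x' hx'
        have hxx' : x ≠ x' := fun h => hzz' (by rw [h])
        have hterm : ∀ k, hammingDist (F x k) (F x' k) = hammingDist (x k) (x' k) := by
          intro k
          by_cases hk : k = i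
          · subst hk
            show (univ.filter fun q => x k (gmap n k j k q) ≠ x' k (gmap n k j k q)).card = _
            rw [card_comp_i n k j (P := fun r => x k r ≠ x' k r)]
            congr 1
            apply Finset.filter_congr
            intro r _
            constructor
            · exact fun h => h.1
            · intro h
              refine ⟨h, fun hr => h ?_⟩
              rw [hr, hxj, hx'j]
          · show (univ.filter fun q => x k (gmap n i j k q) ≠ x' k (gmap n i j k q)).card = _
            rw [card_comp_ne n i j k hk (P := fun r => x k r ≠ x' k r)]
            rfl
        calc d ≤ ∑ k, hammingDist (x k) (x' k) := hdist x hxC x' hx'C hxx'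
          _ = ∑ k, hammingDist (F x k) (F x' k) := by
              exact (Finset.sum_congr rfl fun k _ => hterm k).symm
  calc C.card * w i ≤ n i * Cj.card := hj
    _ ≤ n i * T m (Function.update n i (n i - 1)) (Function.update w i (w i - 1)) d :=
        Nat.mul_le_mul_left _ key
end

section
/- Johnson-type bound (complementary form): T(w_1,n_1; ...; w_m,n_m; d) <= floor( (n_i / (n_i - w_i)) * T(w_1,n_1; ...; w_i, n_i - 1; ...; w_m,n_m; d) ) for each index i with w_i < n_i. -/
open Finset

lemma wt_succAbove {b : ℕ} (p : Fin (b+1)) (x : Fin (b+1) → Bool) (hx : x p = false) :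
    wt (fun q => x (p.succAbove q)) = wt x := by
  unfold wt
  apply Finset.card_bij (fun q _ => p.succAbove q)
  · intro q hq; simpa using (by simpa using hq : x (p.succAbove q) = true)
  · intro q1 h1 q2 h2 h; exact Fin.succAbove_right_injective h
  · intro r hr
    have hr' : x r = true := by simpa using hr
    have hrp : r ≠ p := by rintro rfl; rw [hx] at hr'; simp at hr'
    obtain ⟨q, hq⟩ := Fin.exists_succAbove_eq hrp
    exact ⟨q, by simpa [hq] using hr', hq⟩

lemma hammingDist_succAbove {b : ℕ} (p : Fin (b+1)) (x y : Fin (b+1) → Bool) (hxy : x p = y p) :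
    hammingDist (fun q => x (p.succAbove q)) (fun q => y (p.succAbove q)) = hammingDist x y := by
  unfold hammingDist
  apply Finset.card_bij (fun q _ => p.succAbove q)
  · intro q hq; simpa using (by simpa using hq : x (p.succAbove q) ≠ y (p.succAbove q))
  · intro q1 h1 q2 h2 h; exact Fin.succAbove_right_injective h
  · intro r hr
    have hr' : x r ≠ y r := by simpa using hr
    have hrp : r ≠ p := by rintro rfl; exact hr' hxy
    obtain ⟨q, hq⟩ := Fin.exists_succAbove_eq hrp
    exact ⟨q, by simpa [hq] using hr', hq⟩

lemma succAbove_ext {b : ℕ} (p : Fin (b+1)) {x y : Fin (b+1) → Bool} (hp : x p = y p)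
    (h : ∀ q, x (p.succAbove q) = y (p.succAbove q)) : x = y := by
  funext r
  rcases eq_or_ne r p with rfl | hrp
  · exact hp
  · obtain ⟨q, hq⟩ := Fin.exists_succAbove_eq hrp
    rw [← hq]; exact h q

/-- Deletion of coordinate `p` from a word of length `a = b + 1`. -/
def del {a b : ℕ} (h : a = b + 1) (p : Fin a) (x : Fin a → Bool) : Fin b → Bool :=
  fun q => x (Fin.cast h.symm ((Fin.cast h p).succAbove q))

lemma wt_del {a b : ℕ} (h : a = b + 1) (p : Fin a) (x : Fin a → Bool) (hx : x p = false) :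
    wt (del h p x) = wt x := by
  subst h; exact wt_succAbove p x hx

lemma hammingDist_del {a b : ℕ} (h : a = b + 1) (p : Fin a) (x y : Fin a → Bool)
    (hxy : x p = y p) : hammingDist (del h p x) (del h p y) = hammingDist x y := by
  subst h; exact hammingDist_succAbove p x y hxy

lemma del_inj {a b : ℕ} (h : a = b + 1) (p : Fin a) {x y : Fin a → Bool} (hp : x p = y p)
    (hd : del h p x = del h p y) : x = y := by
  subst h; exact succAbove_ext p hp (fun q => congrFun hd q)

lemma wt_castf {a b : ℕ} (h : b = a) (x : Fin a → Bool) :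
    wt (fun q : Fin b => x (Fin.cast h q)) = wt x := by subst h; rfl

lemma hammingDist_castf {a b : ℕ} (h : b = a) (x y : Fin a → Bool) :
    hammingDist (fun q : Fin b => x (Fin.cast h q)) (fun q : Fin b => y (Fin.cast h q))
      = hammingDist x y := by subst h; rfl

lemma castf_inj {a b : ℕ} (h : b = a) {x y : Fin a → Bool}
    (hd : (fun q : Fin b => x (Fin.cast h q)) = (fun q : Fin b => y (Fin.cast h q))) :
    x = y := by subst h; exact hd

/-- Shortening a multi-block word at position `p` of block `i`. -/
def shorten {m : ℕ} (n : Fin m → ℕ) (i : Fin m) (p : Fin (n i)) (h : n i = (n i - 1) + 1)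
    (x : (j : Fin m) → Fin (n j) → Bool) :
    (j : Fin m) → Fin (Function.update n i (n i - 1) j) → Bool :=
  fun j => if hj : j = i then
      fun q => del h p (x i) (Fin.cast (by rw [hj, Function.update_self]) q)
    else fun q => x j (Fin.cast (by rw [Function.update_of_ne hj]) q)

/-- Johnson-type bound (complementary form):
`T(…; wᵢ, nᵢ; …; d) ≤ ⌊(nᵢ/(nᵢ-wᵢ))·T(…; wᵢ, nᵢ-1; …; d)⌋` whenever `wᵢ < nᵢ`. -/
theorem stmt10 (m : ℕ) (n w : Fin m → ℕ) (d : ℕ) (i : Fin m) (hw : w i < n i) :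
    T m n w d ≤ n i * T m (Function.update n i (n i - 1)) w d / (n i - w i) := by
  have hpos : 0 < n i - w i := by omega
  have hni : n i = (n i - 1) + 1 := by omega
  have hui : Function.update n i (n i - 1) i = n i - 1 := Function.update_self i _ n
  rw [T]
  apply csSup_le'
  rintro s ⟨C, hcard, hwt, hdist⟩
  rw [Nat.le_div_iff_mul_le hpos]
  -- count zeros per codeword on block i
  have hzero : ∀ x ∈ C, (univ.filter fun p : Fin (n i) => x i p = false).card = n i - w i := by
    intro x hx
    have h1 : (univ.filter fun p : Fin (n i) => x i p = false)
        = univ \ (univ.filter fun p : Fin (n i) => x i p = true) := by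
      ext r; simp
    rw [h1, card_sdiff_of_subset (filter_subset _ _), card_univ, Fintype.card_fin]
    have h2 := hwt x hx i
    rw [wt] at h2
    rw [h2]
  -- double counting
  have hsum : ∑ p : Fin (n i), (C.filter fun x => x i p = false).card = s * (n i - w i) := by
    calc ∑ p : Fin (n i), (C.filter fun x => x i p = false).card
        = ∑ p : Fin (n i), ∑ x ∈ C, (if x i p = false then 1 else 0) := by
          refine Finset.sum_congr rfl (fun p _ => ?_)
          rw [Finset.card_filter]
      _ = ∑ x ∈ C, ∑ p : Fin (n i), (if x i p = false then 1 else 0) := Finset.sum_comm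
      _ = ∑ x ∈ C, (univ.filter fun p : Fin (n i) => x i p = false).card := by
          refine Finset.sum_congr rfl (fun x _ => ?_)
          rw [Finset.card_filter]
      _ = ∑ x ∈ C, (n i - w i) := Finset.sum_congr rfl (fun x hx => hzero x hx)
      _ = s * (n i - w i) := by rw [Finset.sum_const, hcard, smul_eq_mul]
  -- pigeonhole: pick a good position p
  have hn0 : 0 < n i := Nat.lt_of_le_of_lt (Nat.zero_le _) hw
  have hne : (univ : Finset (Fin (n i))).Nonempty := ⟨⟨0, hn0⟩, mem_univ _⟩
  have hle : ∑ _p : Fin (n i), s * (n i - w i)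
      ≤ ∑ p : Fin (n i), n i * (C.filter fun x => x i p = false).card := by
    rw [Finset.sum_const, card_univ, Fintype.card_fin, smul_eq_mul, ← Finset.mul_sum, hsum]
  obtain ⟨p, -, hp⟩ := Finset.exists_le_of_sum_le hne hle
  set Cp := C.filter fun x => x i p = false with hCp
  -- the shortened code witnesses Cp.card ≤ T'
  have hmem : Cp.card ∈ {s | ∃ C' : Finset ((j : Fin m) →
      Fin (Function.update n i (n i - 1) j) → Bool), C'.card = s ∧
      (∀ x ∈ C', ∀ j, wt (x j) = w j) ∧
      ∀ x ∈ C', ∀ y ∈ C', x ≠ y → d ≤ ∑ j, hammingDist (x j) (y j)} := by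
    refine ⟨Cp.image (shorten n i p hni), ?_, ?_, ?_⟩
    · rw [Finset.card_image_of_injOn]
      intro x hx y hy hxy
      simp only [hCp, Finset.coe_filter, Set.mem_setOf_eq] at hx hy
      have hpxy : x i p = y i p := by rw [hx.2, hy.2]
      funext j
      rcases eq_or_ne j i with rfl | hj
      · have hx' := congrFun hxy j
        simp only [shorten, dif_pos] at hx'
        exact del_inj hni p hpxy (castf_inj (b := Function.update n j (n j - 1) j) hui hx')
      · have hx' := congrFun hxy j
        simp only [shorten, dif_neg hj] at hx'
        exact castf_inj (b := Function.update n i (n i - 1) j)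
          (Function.update_of_ne hj _ n) hx'
    · intro x hx j
      simp only [Finset.mem_image] at hx
      obtain ⟨y, hy, rfl⟩ := hx
      simp only [hCp, Finset.mem_filter] at hy
      rcases eq_or_ne j i with rfl | hj
      · simp only [shorten, dif_pos]
        rw [wt_castf hui (del hni p (y j)), wt_del hni p (y j) hy.2]
        exact hwt y hy.1 j
      · simp only [shorten, dif_neg hj]
        rw [wt_castf (Function.update_of_ne hj _ n) (y j)]
        exact hwt y hy.1 j
    · intro x hx y hy hxy
      simp only [Finset.mem_image] at hx hy
      obtain ⟨a, ha, rfl⟩ := hx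
      obtain ⟨b, hb, rfl⟩ := hy
      simp only [hCp, Finset.mem_filter] at ha hb
      have hab : a ≠ b := fun h => hxy (by rw [h])
      have hpab : a i p = b i p := by rw [ha.2, hb.2]
      refine le_trans (hdist a ha.1 b hb.1 hab) (le_of_eq ?_)
      refine Finset.sum_congr rfl (fun j _ => ?_)
      rcases eq_or_ne j i with rfl | hj
      · simp only [shorten, dif_pos]
        rw [hammingDist_castf hui (del hni p (a j)) (del hni p (b j))]
        exact (hammingDist_del hni p (a j) (b j) hpab).symm
      · simp only [shorten, dif_neg hj]
        exact (hammingDist_castf (Function.update_of_ne hj _ n) (a j) (b j)).symm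
  have hbdd : BddAbove {s | ∃ C' : Finset ((j : Fin m) →
      Fin (Function.update n i (n i - 1) j) → Bool), C'.card = s ∧
      (∀ x ∈ C', ∀ j, wt (x j) = w j) ∧
      ∀ x ∈ C', ∀ y ∈ C', x ≠ y → d ≤ ∑ j, hammingDist (x j) (y j)} := by
    refine ⟨Fintype.card ((j : Fin m) → Fin (Function.update n i (n i - 1) j) → Bool), ?_⟩
    rintro t ⟨C', hc, -, -⟩
    rw [← hc]
    exact Finset.card_le_univ C'
  have hT : Cp.card ≤ T m (Function.update n i (n i - 1)) w d := le_csSup hbdd hmem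
  calc s * (n i - w i) ≤ n i * Cp.card := hp
    _ ≤ n i * T m (Function.update n i (n i - 1)) w d := Nat.mul_le_mul_left _ hT
end

section
/- Plotkin-type bound for multiply constant-weight codes: if d = 2u and lambda = w_1 + ... + w_m - u, and w_1^2/n_1 + ... + w_m^2/n_m > lambda, then T(w_1,n_1; ...; w_m,n_m; d) <= floor( u / (w_1^2/n_1 + ... + w_m^2/n_m - lambda) ). -/
open Finset

lemma hdist_cast {k : ℕ} (a b : Fin k → Bool) :
    (hammingDist a b : ℚ) = ∑ j, if a j ≠ b j then (1:ℚ) else 0 := by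
  rw [hammingDist, card_filter]
  push_cast [apply_ite (Nat.cast : ℕ → ℚ)]
  rfl

lemma wt_cast {k : ℕ} (a : Fin k → Bool) :
    (wt a : ℚ) = ∑ j, if a j = true then (1:ℚ) else 0 := by
  rw [wt, card_filter]
  push_cast [apply_ite (Nat.cast : ℕ → ℚ)]
  rfl

/-- Plotkin-type bound: with `d = 2u` and `λ = w₁ + ⋯ + w_m - u`, if
`w₁²/n₁ + ⋯ + w_m²/n_m > λ` then `T ≤ ⌊u / (w₁²/n₁ + ⋯ + w_m²/n_m - λ)⌋`. -/
theorem stmt11 (m : ℕ) (n w : Fin m → ℕ) (u : ℕ) (hpos : ∀ i, 0 < n i)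
    (hden : (∑ i, (w i : ℚ) ^ 2 / (n i : ℚ)) - ((∑ i, (w i : ℚ)) - (u : ℚ)) > 0) :
    (T m n w (2 * u) : ℤ) ≤
      ⌊(u : ℚ) / ((∑ i, (w i : ℚ) ^ 2 / (n i : ℚ)) - ((∑ i, (w i : ℚ)) - (u : ℚ)))⌋ := by
  set Sq : ℚ := ∑ i, (w i : ℚ) ^ 2 / (n i : ℚ) with hSq
  set Wq : ℚ := ∑ i, (w i : ℚ) with hWq
  set D : ℚ := Sq - (Wq - u) with hDdef
  have hD : 0 < D := hden
  have key : ∀ C : Finset ((i : Fin m) → Fin (n i) → Bool),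
      (∀ x ∈ C, ∀ i, wt (x i) = w i) →
      (∀ x ∈ C, ∀ y ∈ C, x ≠ y → 2 * u ≤ ∑ i, hammingDist (x i) (y i)) →
      (C.card : ℚ) * D ≤ u := by
    intro C hw hd
    set M : ℚ := (C.card : ℚ) with hM
    rcases Finset.eq_empty_or_nonempty C with rfl | hne
    · simp [hM]
    have hM1 : (1:ℚ) ≤ M := by
      have h1 : 1 ≤ C.card := Finset.card_pos.mpr hne
      rw [hM]
      exact_mod_cast h1
    have hM0 : 0 < M := lt_of_lt_of_le one_pos hM1
    set S1 : ℚ := ∑ x ∈ C, ∑ y ∈ C, ∑ i, (hammingDist (x i) (y i) : ℚ) with hS1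
    -- lower bound on S1
    have lb : 2 * u * M * (M - 1) ≤ S1 := by
      rw [hS1]
      have hx : ∀ x ∈ C, 2 * (u:ℚ) * (M - 1) ≤ ∑ y ∈ C, ∑ i, (hammingDist (x i) (y i) : ℚ) := by
        intro x hx
        rw [← Finset.add_sum_erase _ _ hx]
        have h0 : (∑ i, (hammingDist (x i) (x i) : ℚ)) = 0 := by simp
        rw [h0, zero_add]
        have hterm : ∀ y ∈ C.erase x, 2 * (u:ℚ) ≤ ∑ i, (hammingDist (x i) (y i) : ℚ) := by
          intro y hy
          have hyC := Finset.mem_of_mem_erase hy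
          have hxy : x ≠ y := fun h => (Finset.ne_of_mem_erase hy) h.symm
          have := hd x hx y hyC hxy
          have : ((2 * u : ℕ) : ℚ) ≤ ((∑ i, hammingDist (x i) (y i) : ℕ) : ℚ) := by
            exact_mod_cast this
          push_cast at this
          linarith
        calc 2 * (u:ℚ) * (M - 1) = (C.erase x).card * (2 * u) := by
              rw [Finset.card_erase_of_mem hx]
              have hc1 : (1:ℕ) ≤ C.card := Finset.card_pos.mpr hne
              have : ((C.card - 1 : ℕ) : ℚ) = M - 1 := by
                push_cast [Nat.cast_sub hc1]
                rw [hM]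
              rw [this]; ring
          _ ≤ _ := by
              have := Finset.sum_le_sum hterm
              simpa using (Finset.card_nsmul_le_sum (C.erase x) _ _ hterm)
      calc 2 * (u:ℚ) * M * (M - 1) = ∑ _x ∈ C, 2 * (u:ℚ) * (M - 1) := by
            rw [Finset.sum_const, nsmul_eq_mul, ← hM]; ring
        _ ≤ _ := Finset.sum_le_sum hx
    -- upper bound on S1
    set kq : (i : Fin m) → Fin (n i) → ℚ :=
      fun i j => ((C.filter fun x => x i j = true).card : ℚ) with hkq
    have colsum : ∀ i, ∑ j, kq i j = M * w i := by
      intro i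
      have : ∀ j, kq i j = ∑ x ∈ C, (if x i j = true then (1:ℚ) else 0) := by
        intro j; rw [hkq]; simp [Finset.sum_boole]
      simp_rw [this]
      rw [Finset.sum_comm]
      have : ∀ x ∈ C, (∑ j, if x i j = true then (1:ℚ) else 0) = (w i : ℚ) := by
        intro x hx
        rw [← wt_cast, hw x hx i]
      rw [Finset.sum_congr rfl this, Finset.sum_const, nsmul_eq_mul, ← hM]
    have hinner : ∀ i j, ∑ x ∈ C, ∑ y ∈ C, (if x i j ≠ y i j then (1:ℚ) else 0)
        = 2 * M * kq i j - 2 * (kq i j) ^ 2 := by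
      intro i j
      set b : ((i : Fin m) → Fin (n i) → Bool) → ℚ :=
        fun x => if x i j = true then (1:ℚ) else 0 with hb
      have hbsum : ∑ x ∈ C, b x = kq i j := by
        rw [hb, hkq]; simp [Finset.sum_boole]
      have hpt : ∀ x y, (if x i j ≠ y i j then (1:ℚ) else 0) = b x + b y - 2 * b x * b y := by
        intro x y
        rw [hb]
        cases hx : x i j <;> cases hy : y i j <;> simp [hx, hy] <;> norm_num
      simp_rw [hpt]
      have hrow : ∀ x, ∑ y ∈ C, (b x + b y - 2 * b x * b y) = M * b x + kq i j - 2 * b x * kq i j := by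
        intro x
        rw [Finset.sum_sub_distrib, Finset.sum_add_distrib, Finset.sum_const, nsmul_eq_mul,
          hbsum, ← hM]
        have : ∑ y ∈ C, 2 * b x * b y = 2 * b x * kq i j := by
          rw [← Finset.mul_sum, hbsum]
        rw [this]
      simp_rw [hrow]
      have h1 : ∑ x ∈ C, M * b x = M * kq i j := by rw [← Finset.mul_sum, hbsum]
      have h2 : ∑ x ∈ C, 2 * b x * kq i j = 2 * kq i j ^ 2 := by
        rw [← Finset.sum_mul, ← Finset.mul_sum, hbsum]; ring
      rw [Finset.sum_sub_distrib, Finset.sum_add_distrib, Finset.sum_const, nsmul_eq_mul,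
        ← hM, h1, h2]
      ring
    have swap : S1 = ∑ i, ∑ j, ∑ x ∈ C, ∑ y ∈ C, (if x i j ≠ y i j then (1:ℚ) else 0) := by
      rw [hS1]
      simp_rw [hdist_cast]
      rw [show (∑ x ∈ C, ∑ y ∈ C, ∑ i, ∑ j, if x i j ≠ y i j then (1:ℚ) else 0)
          = ∑ x ∈ C, ∑ i, ∑ y ∈ C, ∑ j, (if x i j ≠ y i j then (1:ℚ) else 0) from
        Finset.sum_congr rfl fun x _ => Finset.sum_comm]
      rw [Finset.sum_comm]
      refine Finset.sum_congr rfl fun i _ => ?_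
      rw [show (∑ x ∈ C, ∑ y ∈ C, ∑ j, if x i j ≠ y i j then (1:ℚ) else 0)
          = ∑ x ∈ C, ∑ j, ∑ y ∈ C, (if x i j ≠ y i j then (1:ℚ) else 0) from
        Finset.sum_congr rfl fun x _ => Finset.sum_comm]
      rw [Finset.sum_comm]
    have ub : S1 ≤ 2 * M ^ 2 * Wq - 2 * M ^ 2 * Sq := by
      rw [swap]
      have hblock : ∀ i, ∑ j, ∑ x ∈ C, ∑ y ∈ C, (if x i j ≠ y i j then (1:ℚ) else 0)
          ≤ 2 * M ^ 2 * (w i : ℚ) - 2 * M ^ 2 * ((w i : ℚ) ^ 2 / (n i : ℚ)) := by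
        intro i
        simp_rw [hinner]
        rw [Finset.sum_sub_distrib, ← Finset.mul_sum, colsum i, ← Finset.mul_sum]
        have hcs : (∑ j, kq i j) ^ 2 ≤ (n i : ℚ) * ∑ j, (kq i j) ^ 2 := by
          have := sq_sum_le_card_mul_sum_sq (s := (Finset.univ : Finset (Fin (n i))))
            (f := kq i)
          simpa using this
        rw [colsum i] at hcs
        have hni : (0:ℚ) < (n i : ℚ) := by exact_mod_cast hpos i
        have h2 : (M * w i) ^ 2 / (n i : ℚ) ≤ ∑ j, (kq i j) ^ 2 := by
          rw [div_le_iff₀ hni]; linarith [hcs]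
        have h3 : 2 * M ^ 2 * ((w i : ℚ) ^ 2 / (n i : ℚ)) = 2 * ((M * (w i:ℚ)) ^ 2 / (n i : ℚ)) := by
          field_simp
        rw [h3]
        nlinarith [h2]
      calc ∑ i, ∑ j, ∑ x ∈ C, ∑ y ∈ C, (if x i j ≠ y i j then (1:ℚ) else 0)
          ≤ ∑ i, (2 * M ^ 2 * (w i : ℚ) - 2 * M ^ 2 * ((w i : ℚ) ^ 2 / (n i : ℚ))) :=
            Finset.sum_le_sum fun i _ => hblock i
        _ = 2 * M ^ 2 * Wq - 2 * M ^ 2 * Sq := by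
            rw [Finset.sum_sub_distrib, ← Finset.mul_sum, ← Finset.mul_sum, ← hWq, ← hSq]
    -- combine
    have main : 2 * u * M * (M - 1) ≤ 2 * M ^ 2 * Wq - 2 * M ^ 2 * Sq := le_trans lb ub
    rw [hDdef]
    nlinarith [main, hM0, mul_pos hM0 hM0]
  -- conclude
  have hud : (0:ℚ) ≤ (u:ℚ) / D := by positivity
  rw [← Int.natCast_floor_eq_floor hud]
  have hT : T m n w (2 * u) ≤ ⌊(u:ℚ) / D⌋₊ := by
    apply csSup_le'
    rintro s ⟨C, rfl, hw, hd⟩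
    exact Nat.le_floor ((le_div_iff₀ hD).mpr (key C hw hd))
  exact_mod_cast hT
end

section
/- Singleton-like bound: if m*w - d/2 + 1 <= m (with d even), then M(m,n,d,w) <= (n/w)^{mw - d/2 + 1}. -/
open Finset

/-- For weight-`w` words `u, v`, the Hamming distance is `2w` minus twice the size of the
common support. -/
lemma block_dist {n w : ℕ} (u v : Fin n → Bool) (hu : wt u = w) (hv : wt v = w) :
    hammingDist u v + 2 * ((univ.filter fun p => u p = true) ∩
      (univ.filter fun p => v p = true)).card = 2 * w := by
  classical
  set Au := univ.filter fun p => u p = true with hAu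
  set Bv := univ.filter fun p => v p = true with hBv
  have hdist : hammingDist u v = (Au \ Bv).card + (Bv \ Au).card := by
    rw [hammingDist, ← Finset.card_union_of_disjoint (disjoint_sdiff_sdiff)]
    congr 1
    ext p
    simp only [hAu, hBv, Finset.mem_filter, Finset.mem_union, Finset.mem_sdiff, mem_univ,
      true_and]
    cases hup : u p <;> cases hvp : v p <;> simp
  have h1 : (Au \ Bv).card + (Au ∩ Bv).card = Au.card := by
    rw [Finset.card_sdiff_add_card_inter]
  have h2 : (Bv \ Au).card + (Bv ∩ Au).card = Bv.card := by
    rw [Finset.card_sdiff_add_card_inter]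
  have h3 : (Bv ∩ Au).card = (Au ∩ Bv).card := by rw [Finset.inter_comm]
  have hAc : Au.card = w := hu
  have hBc : Bv.card = w := hv
  omega

/-- The number of ways to pick one `true` position in each of `s` weight-`w` words is `w ^ s`. -/
lemma card_J {n w s : ℕ} (f : Fin s → Fin n → Bool) (hf : ∀ i, wt (f i) = w) :
    (univ.filter fun j : Fin s → Fin n => ∀ i, f i (j i) = true).card = w ^ s := by
  classical
  rw [← Fintype.card_subtype]
  rw [Fintype.card_congr (Equiv.subtypePiEquivPi (p := fun i v => f i v = true))]
  rw [Fintype.card_pi]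
  have : ∀ i : Fin s, Fintype.card {v : Fin n // f i v = true} = w := by
    intro i
    rw [Fintype.card_subtype]
    exact hf i
  simp [this, Finset.prod_const, Finset.card_univ]

/-- Key counting argument: marked tuples are distinct across codewords. -/
lemma count {m n d w s : ℕ} (hs : s ≤ m) (harith : 2 * w * m < d + 2 * s)
    (C : Finset (Fin m → Fin n → Bool))
    (hC1 : ∀ x ∈ C, ∀ i, wt (x i) = w)
    (hC2 : ∀ x ∈ C, ∀ y ∈ C, x ≠ y → d ≤ ∑ i, hammingDist (x i) (y i)) :
    C.card * w ^ s ≤ n ^ s := by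
  classical
  set J : (Fin m → Fin n → Bool) → Finset (Fin s → Fin n) :=
    fun x => univ.filter fun j => ∀ i, x (Fin.castLE hs i) (j i) = true with hJ
  have hcard : ∀ x ∈ C, (J x).card = w ^ s := fun x hx =>
    card_J _ (fun i => hC1 x hx _)
  have hdisj : ∀ x ∈ C, ∀ y ∈ C, x ≠ y → Disjoint (J x) (J y) := by
    intro x hx y hy hxy
    rw [Finset.disjoint_left]
    intro j hjx hjy
    simp only [hJ, Finset.mem_filter, Finset.mem_univ, true_and] at hjx hjy
    have hdxy := hC2 x hx y hy hxy
    set S : Finset (Fin m) := univ.image (Fin.castLE hs) with hS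
    have hScard : S.card = s := by
      rw [hS, Finset.card_image_of_injective _ (Fin.castLE_injective hs),
        Finset.card_univ, Fintype.card_fin]
    have h1 : ∀ i ∈ S, hammingDist (x i) (y i) + 2 ≤ 2 * w := by
      intro i hi
      obtain ⟨i', -, rfl⟩ := Finset.mem_image.mp hi
      have hbd := block_dist (x (Fin.castLE hs i')) (y (Fin.castLE hs i'))
        (hC1 x hx _) (hC1 y hy _)
      have hmem : j i' ∈ (univ.filter fun p => x (Fin.castLE hs i') p = true) ∩
          (univ.filter fun p => y (Fin.castLE hs i') p = true) := by
        simp [hjx i', hjy i']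
      have hpos := Finset.card_pos.mpr ⟨_, hmem⟩
      omega
    have h2 : ∀ i, hammingDist (x i) (y i) ≤ 2 * w := by
      intro i
      have hbd := block_dist (x i) (y i) (hC1 x hx i) (hC1 y hy i)
      omega
    have hsplit : ∑ i ∈ S, hammingDist (x i) (y i) + ∑ i ∈ Sᶜ, hammingDist (x i) (y i)
        = ∑ i, hammingDist (x i) (y i) := Finset.sum_add_sum_compl S _
    have hbound1 : ∑ i ∈ S, hammingDist (x i) (y i) + 2 * s ≤ 2 * w * s := by
      have := Finset.sum_le_sum h1
      rw [Finset.sum_add_distrib, Finset.sum_const, Finset.sum_const, hScard] at this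
      simpa [mul_comm, Nat.smul_one_eq_cast] using this
    have hbound2 : ∑ i ∈ Sᶜ, hammingDist (x i) (y i) ≤ 2 * w * (m - s) := by
      have hScc : Sᶜ.card = m - s := by
        rw [Finset.card_compl, hScard, Fintype.card_fin]
      calc ∑ i ∈ Sᶜ, hammingDist (x i) (y i) ≤ ∑ _i ∈ Sᶜ, 2 * w :=
            Finset.sum_le_sum (fun i _ => h2 i)
        _ = (m - s) * (2 * w) := by rw [Finset.sum_const, hScc, smul_eq_mul]
        _ = 2 * w * (m - s) := mul_comm _ _
    have htot : 2 * w * s + 2 * w * (m - s) = 2 * w * m := by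
      rw [← Nat.mul_add, Nat.add_sub_cancel' hs]
    omega
  have hsum : ∑ x ∈ C, (J x).card ≤ n ^ s := by
    rw [← Finset.card_biUnion hdisj]
    calc (C.biUnion J).card ≤ Fintype.card (Fin s → Fin n) :=
          Finset.card_le_univ _
      _ = n ^ s := by simp [Fintype.card_fun]
  calc C.card * w ^ s = ∑ x ∈ C, (J x).card := by
        rw [Finset.sum_congr rfl hcard, Finset.sum_const, smul_eq_mul]
    _ ≤ n ^ s := hsum

/-- Singleton-like bound: if `d` is even and `mw - d/2 + 1 ≤ m`, then
`M(m,n,d,w) ≤ (n/w)^{mw - d/2 + 1}`. -/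
theorem stmt13 (m n d w : ℕ) (hw : 1 ≤ w) (hd : Even d)
    (hs : m * w - d / 2 + 1 ≤ m) :
    (M m n d w : ℚ) ≤ ((n : ℚ) / (w : ℚ)) ^ (m * w - d / 2 + 1) := by
  obtain ⟨k, hk⟩ := hd
  set s := m * w - d / 2 + 1 with hsdef
  have harith : 2 * w * m < d + 2 * s := by
    have h2 : 2 * w * m = 2 * (m * w) := by ring
    rw [h2, hsdef]
    have hdk : d / 2 = k := by omega
    rw [hdk]
    have := Nat.sub_le (m * w) k
    omega
  have hkey : ∀ t ∈ {t | ∃ C : Finset (Fin m → Fin n → Bool), C.card = t ∧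
      (∀ x ∈ C, ∀ i, wt (x i) = w) ∧
      ∀ x ∈ C, ∀ y ∈ C, x ≠ y → d ≤ ∑ i, hammingDist (x i) (y i)},
      t * w ^ s ≤ n ^ s := by
    rintro t ⟨C, rfl, hC1, hC2⟩
    exact count hs harith C hC1 hC2
  have hne : ({t | ∃ C : Finset (Fin m → Fin n → Bool), C.card = t ∧
      (∀ x ∈ C, ∀ i, wt (x i) = w) ∧
      ∀ x ∈ C, ∀ y ∈ C, x ≠ y → d ≤ ∑ i, hammingDist (x i) (y i)} : Set ℕ).Nonempty :=
    ⟨0, ∅, by simp⟩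
  have hwpow : 1 ≤ w ^ s := Nat.one_le_pow _ _ hw
  have hbdd : BddAbove {t | ∃ C : Finset (Fin m → Fin n → Bool), C.card = t ∧
      (∀ x ∈ C, ∀ i, wt (x i) = w) ∧
      ∀ x ∈ C, ∀ y ∈ C, x ≠ y → d ≤ ∑ i, hammingDist (x i) (y i)} := by
    refine ⟨n ^ s, fun t ht => ?_⟩
    have h1 := hkey t ht
    calc t = t * 1 := (mul_one t).symm
      _ ≤ t * w ^ s := Nat.mul_le_mul_left t hwpow
      _ ≤ n ^ s := h1
  have hmem := Nat.sSup_mem hne hbdd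
  have hM : M m n d w * w ^ s ≤ n ^ s := hkey _ hmem
  have hwQ : (0 : ℚ) < (w : ℚ) ^ s := by
    have : (0 : ℚ) < (w : ℚ) := by exact_mod_cast hw
    positivity
  rw [div_pow, le_div_iff₀ hwQ]
  exact_mod_cast hM
end

section
/- If s = mw - d/2 + 1 <= m, n/w is a prime power, and n/w >= mw - 1, then M(m,n,d,w) = (n/w)^s exactly. -/
open Finset

lemma hammingDist_eq_card {n : ℕ} (x y : Fin n → Bool) :
    hammingDist x y = (univ.filter fun i => x i ≠ y i).card := rfl

lemma dist_le_two_w {n w : ℕ} (a b : Fin n → Bool) (ha : wt a = w) (hb : wt b = w) :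
    hammingDist a b ≤ 2 * w := by
  rw [hammingDist_eq_card]
  have hsub : (univ.filter fun i => a i ≠ b i) ⊆
      (univ.filter fun i => a i = true) ∪ (univ.filter fun i => b i = true) := by
    intro i hi
    simp only [mem_filter, mem_univ, true_and, mem_union] at *
    cases hA : a i <;> cases hB : b i <;> simp_all
  calc (univ.filter fun i => a i ≠ b i).card
      ≤ ((univ.filter fun i => a i = true) ∪ (univ.filter fun i => b i = true)).card :=
        card_le_card hsub
    _ ≤ _ := by
        have := card_union_le (univ.filter fun i => a i = true)
          (univ.filter fun i => b i = true)
        unfold wt at ha hb; omega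

lemma dist_le_of_share {n w : ℕ} (a b : Fin n → Bool) (ha : wt a = w) (hb : wt b = w)
    (y : Fin n) (hya : a y = true) (hyb : b y = true) :
    hammingDist a b + 2 ≤ 2 * w := by
  rw [hammingDist_eq_card]
  unfold wt at ha hb
  set A := univ.filter fun i => a i = true with hA
  set B := univ.filter fun i => b i = true with hB
  have hsub : (univ.filter fun i => a i ≠ b i) ⊆ (A ∪ B) \ (A ∩ B) := by
    intro i hi
    simp only [hA, hB, mem_filter, mem_univ, true_and, mem_sdiff, mem_union, mem_inter] at *
    cases hA' : a i <;> cases hB' : b i <;> simp_all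
  have h1 : (univ.filter fun i => a i ≠ b i).card ≤ ((A ∪ B) \ (A ∩ B)).card :=
    card_le_card hsub
  have h2 : ((A ∪ B) \ (A ∩ B)).card + (A ∩ B).card = (A ∪ B).card :=
    card_sdiff_add_card_eq_card inter_subset_union
  have h3 : (A ∪ B).card + (A ∩ B).card = A.card + B.card := card_union_add_card_inter A B
  have h4 : 1 ≤ (A ∩ B).card := by
    refine card_pos.mpr ⟨y, ?_⟩
    simp [hA, hB, mem_inter, hya, hyb]
  omega

lemma upper_bound (m n w u : ℕ) (hw : 0 < w) (hu : 0 < u) (hum : u ≤ m * w)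
    (hs : m * w - u + 1 ≤ m)
    (C : Finset (Fin m → Fin n → Bool))
    (hwt : ∀ x ∈ C, ∀ i, wt (x i) = w)
    (hd : ∀ x ∈ C, ∀ y ∈ C, x ≠ y → 2 * u ≤ ∑ i, hammingDist (x i) (y i)) :
    C.card * w ^ (m * w - u + 1) ≤ n ^ (m * w - u + 1) := by
  set s := m * w - u + 1 with hsdef
  set H : (Fin m → Fin n → Bool) → Finset (Fin s → Fin n) :=
    fun c => Fintype.piFinset fun j => univ.filter fun y => c (Fin.castLE hs j) y = true with hH
  have hcard : ∀ c ∈ C, (H c).card = w ^ s := by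
    intro c hc
    rw [hH]
    rw [Fintype.card_piFinset]
    have : ∀ j : Fin s, (univ.filter fun y => c (Fin.castLE hs j) y = true).card = w :=
      fun j => hwt c hc (Fin.castLE hs j)
    simp [this]
  have hdisj : ∀ x ∈ C, ∀ y ∈ C, x ≠ y → Disjoint (H x) (H y) := by
    intro c hc c' hc' hne
    rw [Finset.disjoint_left]
    intro x hx hx'
    rw [hH, Fintype.mem_piFinset] at hx hx'
    simp only [mem_filter, mem_univ, true_and] at hx hx'
    set T : Finset (Fin m) := univ.image (Fin.castLE hs) with hT
    have hTcard : T.card = s := by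
      rw [hT, Finset.card_image_of_injective _ (Fin.castLE_injective hs)]
      simp
    have key : ∀ i : Fin m, hammingDist (c i) (c' i) + (if i ∈ T then 2 else 0) ≤ 2 * w := by
      intro i
      by_cases hiT : i ∈ T
      · simp only [hiT, if_true]
        obtain ⟨j, _, hj⟩ := Finset.mem_image.mp hiT
        subst hj
        exact dist_le_of_share _ _ (hwt c hc _) (hwt c' hc' _) (x j) (hx j) (hx' j)
      · simp only [hiT, if_false, add_zero]
        exact dist_le_two_w _ _ (hwt c hc i) (hwt c' hc' i)
    have hsum : ∑ i, (hammingDist (c i) (c' i) + (if i ∈ T then 2 else 0)) ≤ m * (2 * w) := by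
      calc ∑ i, (hammingDist (c i) (c' i) + (if i ∈ T then 2 else 0))
          ≤ ∑ _i : Fin m, 2 * w := Finset.sum_le_sum fun i _ => key i
        _ = m * (2 * w) := by simp [mul_comm]
    rw [Finset.sum_add_distrib] at hsum
    have hite : ∑ i, (if i ∈ T then 2 else 0) = 2 * s := by
      rw [Finset.sum_ite_mem]
      simp [hTcard, mul_comm]
    have hdist := hd c hc c' hc' hne
    have hmul : m * (2 * w) = 2 * (m * w) := by ring
    omega
  have hbiU : (C.biUnion H).card = ∑ c ∈ C, (H c).card := Finset.card_biUnion hdisj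
  have hle : (C.biUnion H).card ≤ n ^ s := by
    calc (C.biUnion H).card ≤ (univ : Finset (Fin s → Fin n)).card :=
          card_le_card (subset_univ _)
      _ = n ^ s := by simp [card_univ]
  have : ∑ c ∈ C, (H c).card = C.card * w ^ s := by
    rw [Finset.sum_congr rfl hcard, Finset.sum_const, smul_eq_mul]
  omega



lemma wt_row {n w q : ℕ} (E : Fin n ≃ Fin w × Fin q) (g : Fin w → Fin q) :
    wt (fun y => decide ((E y).2 = g (E y).1)) = w := by
  unfold wt
  have him : (univ.filter fun y => (decide ((E y).2 = g (E y).1)) = true)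
      = univ.image (fun j => E.symm (j, g j)) := by
    ext y
    simp only [mem_filter, mem_univ, true_and, decide_eq_true_eq, mem_image]
    constructor
    · intro h
      refine ⟨(E y).1, ?_⟩
      rw [← h, Prod.mk.eta, Equiv.symm_apply_apply]
    · rintro ⟨j, -, rfl⟩
      simp
  rw [him, Finset.card_image_of_injective, card_univ, Fintype.card_fin]
  intro a b hab
  have := congrArg (fun z => (E z).1) hab
  simpa using this

lemma dist_row {n w q : ℕ} (E : Fin n ≃ Fin w × Fin q) (g g' : Fin w → Fin q) :
    hammingDist (fun y => decide ((E y).2 = g (E y).1))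
      (fun y => decide ((E y).2 = g' (E y).1))
      = 2 * (univ.filter fun j => g j ≠ g' j).card := by
  rw [hammingDist_eq_card, Finset.card_filter]
  rw [← Equiv.sum_comp E.symm
    (fun y => if (decide ((E y).2 = g (E y).1)) ≠ (decide ((E y).2 = g' (E y).1)) then 1 else 0)]
  simp only [Equiv.apply_symm_apply]
  rw [Fintype.sum_prod_type]
  have inner : ∀ j : Fin w,
      (∑ b : Fin q, if (decide (b = g j)) ≠ (decide (b = g' j)) then 1 else 0)
        = if g j ≠ g' j then 2 else 0 := by
    intro j
    by_cases h : g j = g' j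
    · simp [h]
    · rw [if_pos h]
      have hset : (univ.filter fun b : Fin q => (decide (b = g j)) ≠ (decide (b = g' j)))
          = {g j, g' j} := by
        ext b
        simp only [mem_filter, mem_univ, true_and, ne_eq, decide_eq_decide, mem_insert,
          mem_singleton]
        constructor
        · intro hb
          by_cases h1 : b = g j
          · exact Or.inl h1
          · by_cases h2 : b = g' j
            · exact Or.inr h2
            · exact absurd (iff_of_false h1 h2) hb
        · rintro (rfl | rfl) <;> simp_all
          intro h'
          exact h h'.symm
      rw [← Finset.card_filter, hset, Finset.card_insert_of_notMem (by simpa using h),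
        Finset.card_singleton]
  rw [Finset.sum_congr rfl fun j _ => inner j]
  rw [Finset.card_filter, Finset.mul_sum]
  simp [mul_ite]

lemma card_filter_equiv {α β : Type*} [Fintype α] [Fintype β] [DecidableEq α] [DecidableEq β]
    (σ : α ≃ β) (P : β → Prop) [DecidablePred P] :
    (univ.filter fun a => P (σ a)).card = (univ.filter P).card := by
  refine Finset.card_bij' (fun a _ => σ a) (fun b _ => σ.symm b) ?_ ?_ ?_ ?_ <;> simp

open Polynomial in
lemma agree_card {F : Type*} [Field F] [DecidableEq F]
    {q : ℕ} (hq0 : 0 < q) (e : Fin q ≃ F) (N s : ℕ) (hNq : N ≤ q + 1) (hs1 : 1 ≤ s)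
    (h : F[X]) (hne : h ≠ 0) (hdeg : h.natDegree ≤ s - 1) :
    (univ.filter fun k : Fin N =>
      (if hk : (k : ℕ) < q then h.eval (e ⟨(k : ℕ), hk⟩) else h.coeff (s - 1)) = 0).card
      ≤ s - 1 := by
  classical
  set A := univ.filter fun k : Fin N =>
      (if hk : (k : ℕ) < q then h.eval (e ⟨(k : ℕ), hk⟩) else h.coeff (s - 1)) = 0 with hA
  have hsplit := Finset.card_filter_add_card_filter_not
    (s := A) (p := fun k => k.val < q)
  have hroots : (A.filter fun k => k.val < q).card ≤ h.natDegree := by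
    have h1 : (A.filter fun k => k.val < q).card ≤ h.roots.toFinset.card := by
      apply Finset.card_le_card_of_injOn (fun k => e ⟨k.val % q, Nat.mod_lt _ hq0⟩)
      · intro k hk
        rw [Finset.mem_coe, Finset.mem_filter] at hk
        obtain ⟨hkA, hklt⟩ := hk
        rw [hA, Finset.mem_filter] at hkA
        have hval := hkA.2
        rw [dif_pos hklt] at hval
        have hmod : k.val % q = k.val := Nat.mod_eq_of_lt hklt
        simp only [Finset.mem_coe, Multiset.mem_toFinset, mem_roots', IsRoot.def]
        refine ⟨hne, ?_⟩
        rw [show (⟨k.val % q, Nat.mod_lt _ hq0⟩ : Fin q) = ⟨k.val, hklt⟩ from Fin.ext hmod]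
        exact hval
      · intro a ha b hb hab
        simp only [mem_coe, Finset.mem_filter] at ha hb
        have heq : (⟨a.val % q, Nat.mod_lt _ hq0⟩ : Fin q) = ⟨b.val % q, Nat.mod_lt _ hq0⟩ :=
          e.injective hab
        have hmm : a.val % q = b.val % q := congrArg Fin.val heq
        rw [Nat.mod_eq_of_lt ha.2, Nat.mod_eq_of_lt hb.2] at hmm
        exact Fin.ext hmm
    calc (A.filter fun k => k.val < q).card ≤ h.roots.toFinset.card := h1
      _ ≤ Multiset.card h.roots := Multiset.toFinset_card_le _
      _ ≤ h.natDegree := Polynomial.card_roots' h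
  have hone : (A.filter fun k => ¬ k.val < q).card ≤ 1 := by
    apply Finset.card_le_one.mpr
    intro a ha b hb
    simp only [Finset.mem_filter] at ha hb
    have ha2 := a.isLt
    have hb2 := b.isLt
    have hha := ha.2
    have hhb := hb.2
    exact Fin.ext (by omega)
  by_cases hc : h.coeff (s - 1) = 0
  · have hld : h.coeff h.natDegree ≠ 0 := by
      rw [← Polynomial.leadingCoeff]
      exact Polynomial.leadingCoeff_ne_zero.mpr hne
    have hnd : h.natDegree ≠ s - 1 := by
      intro hEq
      rw [hEq] at hld
      exact hld hc
    omega
  · have hempty : (A.filter fun k => ¬ k.val < q) = ∅ := by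
      apply Finset.filter_eq_empty_iff.mpr
      intro k hk
      rw [hA, Finset.mem_filter] at hk
      have hk2 := hk.2
      intro hklt
      rw [dif_neg hklt] at hk2
      exact hc hk2
    rw [hempty] at hsplit
    simp only [Finset.card_empty] at hsplit
    omega

open Polynomial in
lemma lower_bound_field {F : Type*} [Field F] [Fintype F] [DecidableEq F]
    (m w u q n : ℕ) (hw : 0 < w) (hu : 0 < u) (hum : u ≤ m * w)
    (E : Fin n ≃ Fin w × Fin q) (hFcard : Fintype.card F = q) (hq0 : 0 < q)
    (hqn : m * w - 1 ≤ q) :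
    ∃ C : Finset (Fin m → Fin n → Bool), C.card = q ^ (m * w - u + 1) ∧
      (∀ x ∈ C, ∀ i, wt (x i) = w) ∧
      ∀ x ∈ C, ∀ y ∈ C, x ≠ y → 2 * u ≤ ∑ i, hammingDist (x i) (y i) := by
  classical
  set s := m * w - u + 1 with hsdef
  have hNq : m * w ≤ q + 1 := by omega
  set e : Fin q ≃ F := (Fintype.equivFinOfCardEq hFcard).symm with he
  set K : Fin m × Fin w ≃ Fin (m * w) := finProdFinEquiv with hK
  -- polynomial from coefficient vector
  set P : (Fin s → F) → F[X] := fun c => ∑ j : Fin s, Polynomial.C (c j) * X ^ (j : ℕ) with hP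
  have hcoeff : ∀ c t, (P c).coeff t = if ht : t < s then c ⟨t, ht⟩ else 0 := by
    intro c t
    simp only [hP, Polynomial.finset_sum_coeff, Polynomial.coeff_C_mul, Polynomial.coeff_X_pow,
      mul_ite, mul_one, mul_zero]
    by_cases ht : t < s
    · rw [dif_pos ht, Finset.sum_eq_single (⟨t, ht⟩ : Fin s)]
      · simp
      · intro j _ hj
        have : t ≠ (j : ℕ) := fun hEq => hj (Fin.ext hEq.symm)
        simp [this]
      · intro habs
        exact absurd (mem_univ _) habs
    · rw [dif_neg ht]
      apply Finset.sum_eq_zero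
      intro j _
      have : t ≠ (j : ℕ) := by have := j.isLt; omega
      simp [this]
  have hsub : ∀ c c' : Fin s → F, c ≠ c' → P c - P c' ≠ 0 := by
    intro c c' hne hzero
    apply hne
    funext j
    have h1 : (P c - P c').coeff (j : ℕ) = 0 := by rw [hzero]; simp
    rw [Polynomial.coeff_sub, hcoeff, hcoeff, dif_pos j.isLt, dif_pos j.isLt] at h1
    have := sub_eq_zero.mp h1
    simpa using this
  have hdeg : ∀ c c' : Fin s → F, (P c - P c').natDegree ≤ s - 1 := by
    intro c c'
    apply Polynomial.natDegree_le_iff_coeff_eq_zero.mpr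
    intro t ht
    have hts : ¬ t < s := by omega
    rw [Polynomial.coeff_sub, hcoeff, hcoeff, dif_neg hts, dif_neg hts, sub_self]
  -- evaluation map (extended RS)
  set v : F[X] → Fin (m * w) → F := fun f k =>
    if hk : (k : ℕ) < q then f.eval (e ⟨(k : ℕ), hk⟩) else f.coeff (s - 1) with hv
  -- the key agreement bound
  have hagree : ∀ c c' : Fin s → F, c ≠ c' →
      (univ.filter fun k : Fin (m * w) => v (P c) k = v (P c') k).card ≤ s - 1 := by
    intro c c' hne
    have hfilter : (univ.filter fun k : Fin (m * w) => v (P c) k = v (P c') k)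
        = univ.filter fun k : Fin (m * w) =>
          (if hk : (k : ℕ) < q then (P c - P c').eval (e ⟨(k : ℕ), hk⟩)
            else (P c - P c').coeff (s - 1)) = 0 := by
      apply Finset.filter_congr
      intro k _
      simp only [hv]
      by_cases hk : (k : ℕ) < q
      · rw [dif_pos hk, dif_pos hk, dif_pos hk, Polynomial.eval_sub, sub_eq_zero]
      · rw [dif_neg hk, dif_neg hk, dif_neg hk, Polynomial.coeff_sub, sub_eq_zero]
    rw [hfilter]
    exact agree_card hq0 e (m * w) s hNq (by omega) _ (hsub c c' hne) (hdeg c c')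
  -- symbol functions and codewords
  set tt : (Fin s → F) → Fin m → Fin w → Fin q :=
    fun c i j => e.symm (v (P c) (K (i, j))) with htt
  set Φ : (Fin s → F) → Fin m → Fin n → Bool :=
    fun c i y => decide ((E y).2 = tt c i (E y).1) with hΦ
  have hdist : ∀ c c' : Fin s → F, c ≠ c' →
      2 * u ≤ ∑ i, hammingDist (Φ c i) (Φ c' i) := by
    intro c c' hne
    have hrow : ∀ i, hammingDist (Φ c i) (Φ c' i)
        = 2 * (univ.filter fun j => tt c i j ≠ tt c' i j).card := fun i =>
      dist_row E (tt c i) (tt c' i)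
    rw [Finset.sum_congr rfl fun i _ => hrow i, ← Finset.mul_sum]
    have hprod : ∑ i, (univ.filter fun j => tt c i j ≠ tt c' i j).card
        = (univ.filter fun kp : Fin m × Fin w => tt c kp.1 kp.2 ≠ tt c' kp.1 kp.2).card := by
      rw [Finset.card_filter, Fintype.sum_prod_type]
      simp only [Finset.card_filter]
    have hpe : (univ.filter fun kp : Fin m × Fin w => tt c kp.1 kp.2 ≠ tt c' kp.1 kp.2).card
        = (univ.filter fun k : Fin (m * w) => v (P c) k ≠ v (P c') k).card := by
      have hiff : ∀ kp : Fin m × Fin w,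
          (tt c kp.1 kp.2 ≠ tt c' kp.1 kp.2) ↔ (v (P c) (K kp) ≠ v (P c') (K kp)) := by
        intro kp
        simp only [htt]
        exact e.symm.injective.ne_iff
      calc (univ.filter fun kp : Fin m × Fin w => tt c kp.1 kp.2 ≠ tt c' kp.1 kp.2).card
          = (univ.filter fun kp : Fin m × Fin w =>
              v (P c) (K kp) ≠ v (P c') (K kp)).card := by
            apply congrArg
            apply Finset.filter_congr
            intro kp _
            simpa using hiff kp
        _ = _ := card_filter_equiv K (fun k => v (P c) k ≠ v (P c') k)
    rw [hprod, hpe]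
    have hsplit := Finset.card_filter_add_card_filter_not
      (s := (univ : Finset (Fin (m * w)))) (p := fun k => v (P c) k ≠ v (P c') k)
    have hAle : (univ.filter fun k : Fin (m * w) => ¬ v (P c) k ≠ v (P c') k).card ≤ s - 1 := by
      have hsame : (univ.filter fun k : Fin (m * w) => ¬ v (P c) k ≠ v (P c') k)
          = univ.filter fun k : Fin (m * w) => v (P c) k = v (P c') k := by
        apply Finset.filter_congr
        intro k _
        simp
      rw [hsame]
      exact hagree c c' hne
    have hcu : (univ : Finset (Fin (m * w))).card = m * w := by simp
    have hge : u ≤ (univ.filter fun k : Fin (m * w) => v (P c) k ≠ v (P c') k).card := by omega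
    omega
  have hΦinj : Function.Injective Φ := by
    intro c c' hEq
    by_contra hne
    have h2u := hdist c c' hne
    rw [hEq] at h2u
    simp only [hammingDist_self, Finset.sum_const_zero] at h2u
    omega
  refine ⟨Finset.image Φ univ, ?_, ?_, ?_⟩
  · rw [Finset.card_image_of_injective _ hΦinj, card_univ]
    simp [hFcard]
  · rintro x hx i
    obtain ⟨c, -, rfl⟩ := Finset.mem_image.mp hx
    exact wt_row E (tt c i)
  · rintro x hx y hy hxy
    obtain ⟨c, -, rfl⟩ := Finset.mem_image.mp hx
    obtain ⟨c', -, rfl⟩ := Finset.mem_image.mp hy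
    exact hdist c c' (fun hEq => hxy (by rw [hEq]))

lemma lower_bound (m w u q n : ℕ) (hw : 0 < w) (hu : 0 < u) (hum : u ≤ m * w)
    (E : Fin n ≃ Fin w × Fin q)
    (hq : ∃ p r : ℕ, p.Prime ∧ 0 < r ∧ q = p ^ r)
    (hqn : m * w - 1 ≤ q) :
    ∃ C : Finset (Fin m → Fin n → Bool), C.card = q ^ (m * w - u + 1) ∧
      (∀ x ∈ C, ∀ i, wt (x i) = w) ∧
      ∀ x ∈ C, ∀ y ∈ C, x ≠ y → 2 * u ≤ ∑ i, hammingDist (x i) (y i) := by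
  obtain ⟨p, r, hp, hr, hqe⟩ := hq
  haveI : Fact p.Prime := ⟨hp⟩
  haveI : DecidableEq (GaloisField p r) := Classical.decEq _
  haveI : Fintype (GaloisField p r) := Fintype.ofFinite _
  have hFcard : Fintype.card (GaloisField p r) = q := by
    rw [← Nat.card_eq_fintype_card, GaloisField.card p r hr.ne']; exact hqe.symm
  have hq0 : 0 < q := by rw [hqe]; exact pow_pos hp.pos r
  exact lower_bound_field (F := GaloisField p r) m w u q n hw hu hum E hFcard hq0 hqn

/-- Exactness: if `s = mw - d/2 + 1 ≤ m` (here `d = 2u`, `s = mw - u + 1`), `n/w` is a prime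
power and `n/w ≥ mw - 1`, then `M(m,n,d,w) = (n/w)^s`. -/
theorem stmt15 (m n w u : ℕ) (hw : 0 < w) (hu : 0 < u) (hum : u ≤ m * w)
    (hdvd : w ∣ n) (hs : m * w - u + 1 ≤ m)
    (hq : ∃ p r : ℕ, p.Prime ∧ 0 < r ∧ n / w = p ^ r)
    (hqn : m * w - 1 ≤ n / w) :
    M m n (2 * u) w = (n / w) ^ (m * w - u + 1) := by
  have hn : n = w * (n / w) := (Nat.mul_div_cancel' hdvd).symm
  set q := n / w with hqdef
  set s := m * w - u + 1 with hsdef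
  set S := {s' | ∃ C : Finset (Fin m → Fin n → Bool), C.card = s' ∧
    (∀ x ∈ C, ∀ i, wt (x i) = w) ∧
    ∀ x ∈ C, ∀ y ∈ C, x ≠ y → 2 * u ≤ ∑ i, hammingDist (x i) (y i)} with hS
  have hub : ∀ a ∈ S, a ≤ q ^ s := by
    rintro a ⟨C, rfl, hwt, hd⟩
    have h1 := upper_bound m n w u hw hu hum hs C hwt hd
    have h2 : n ^ s = q ^ s * w ^ s := by rw [hn, mul_pow, mul_comm]
    rw [h2] at h1
    exact Nat.le_of_mul_le_mul_right h1 (pow_pos hw s)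
  have E : Fin n ≃ Fin w × Fin q := (finCongr hn).trans finProdFinEquiv.symm
  obtain ⟨C₀, hC₀card, hC₀wt, hC₀d⟩ := lower_bound m w u q n hw hu hum E hq hqn
  have hmem : q ^ s ∈ S := ⟨C₀, hC₀card, hC₀wt, hC₀d⟩
  show sSup S = q ^ s
  apply le_antisymm
  · exact csSup_le ⟨_, hmem⟩ hub
  · exact le_csSup ⟨q ^ s, fun a ha => hub a ha⟩ hmem
end

section
/- Graph homomorphism independence bound: if G and H are finite graphs, H is vertex-transitive, and there exists a graph homomorphism from G to H, then alpha(H) <= (|V(H)| / |V(G)|) * alpha(G), where alpha denotes the independence number. -/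
/-- Independence number of a finite simple graph. -/
noncomputable def indepNum {V : Type*} [Fintype V] (G : SimpleGraph V) : ℕ :=
  sSup {k | ∃ s : Finset V, s.card = k ∧ ∀ x ∈ s, ∀ y ∈ s, ¬ G.Adj x y}

/-- If `H` is vertex-transitive and there is a graph homomorphism `G → H`, then
`α(H) ≤ (|V(H)|/|V(G)|)·α(G)`. -/
theorem stmt16 {V W : Type*} [Fintype V] [Fintype W] (G : SimpleGraph V) (H : SimpleGraph W)
    (htrans : ∀ u v : W, ∃ φ : H ≃g H, φ u = v)
    (hhom : Nonempty (G →g H)) :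
    indepNum H * Fintype.card V ≤ Fintype.card W * indepNum G := by
  classical
  obtain ⟨f⟩ := hhom
  rcases isEmpty_or_nonempty V with hV | hV
  · simp [Fintype.card_eq_zero]
  have hW : Nonempty W := ⟨f (Classical.arbitrary V)⟩
  haveI : Fintype (H ≃g H) :=
    Fintype.ofInjective (fun φ : H ≃g H => (φ : W → W)) DFunLike.coe_injective
  -- extract a maximum independent set S of H
  have hbddH : BddAbove {k | ∃ s : Finset W, s.card = k ∧ ∀ x ∈ s, ∀ y ∈ s, ¬ H.Adj x y} :=
    ⟨Fintype.card W, fun k ⟨s, hs, _⟩ => hs ▸ s.card_le_univ⟩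
  have hmem : indepNum H ∈ {k | ∃ s : Finset W, s.card = k ∧ ∀ x ∈ s, ∀ y ∈ s, ¬ H.Adj x y} :=
    Nat.sSup_mem ⟨0, ⟨∅, by simp⟩⟩ hbddH
  obtain ⟨S, hScard, hSind⟩ := hmem
  -- any independent set of G has size ≤ indepNum G
  have hG : ∀ t : Finset V, (∀ x ∈ t, ∀ y ∈ t, ¬ G.Adj x y) → t.card ≤ indepNum G := by
    intro t ht
    exact le_csSup ⟨Fintype.card V, fun k ⟨s, hs, _⟩ => hs ▸ s.card_le_univ⟩ ⟨t, rfl, ht⟩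
  -- fiber counts are all equal
  set u₀ : W := Classical.arbitrary W with hu₀
  set c : ℕ := (Finset.univ.filter (fun φ : H ≃g H => φ u₀ = u₀)).card with hc
  have hfib : ∀ u w : W,
      (Finset.univ.filter (fun φ : H ≃g H => φ u = w)).card = c := by
    intro u w
    obtain ⟨ψ, hψ⟩ := htrans u₀ u
    obtain ⟨χ, hχ⟩ := htrans w u₀
    rw [hc]
    apply Finset.card_bij' (fun φ _ => (ψ.trans φ).trans χ)
      (fun θ _ => (ψ.symm.trans θ).trans χ.symm)
    · intro φ hφ
      simp only [Finset.mem_filter, Finset.mem_univ, true_and] at hφ ⊢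
      simp [RelIso.trans_apply, hψ, hφ, hχ]
    · intro θ hθ
      simp only [Finset.mem_filter, Finset.mem_univ, true_and] at hθ ⊢
      have h1 : ψ.symm u = u₀ := by rw [← hψ]; exact ψ.symm_apply_apply u₀
      have h2 : χ.symm u₀ = w := by rw [← hχ]; exact χ.symm_apply_apply w
      simp [RelIso.trans_apply, h1, hθ, h2]
    · intro φ _
      ext x
      simp [RelIso.trans_apply]
    · intro θ _
      ext x
      simp [RelIso.trans_apply]
  -- card of automorphism group
  have hcardA : ∀ u : W, Fintype.card (H ≃g H) = Fintype.card W * c := by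
    intro u
    have := Finset.card_eq_sum_card_fiberwise
      (f := fun φ : H ≃g H => φ u) (s := Finset.univ) (t := Finset.univ)
      (fun φ _ => Finset.mem_univ _)
    rw [Finset.card_univ] at this
    rw [this]
    rw [Finset.sum_congr rfl (fun w _ => hfib u w), Finset.sum_const, Finset.card_univ,
      smul_eq_mul]
  have hA : Fintype.card (H ≃g H) = Fintype.card W * c := hcardA u₀
  have hcpos : 0 < c := by
    rcases Nat.eq_zero_or_pos c with h | h
    · exfalso
      have hpos : 0 < Fintype.card (H ≃g H) := Fintype.card_pos_iff.mpr ⟨RelIso.refl _⟩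
      rw [hA, h, mul_zero] at hpos
      exact lt_irrefl 0 hpos
    · exact h
  -- double counting
  have key : ∀ u : W, (Finset.univ.filter (fun φ : H ≃g H => φ u ∈ S)).card = S.card * c := by
    intro u
    have := Finset.card_eq_sum_card_fiberwise
      (f := fun φ : H ≃g H => φ u)
      (s := Finset.univ.filter (fun φ : H ≃g H => φ u ∈ S)) (t := S)
      (fun φ hφ => (Finset.mem_filter.mp hφ).2)
    rw [this]
    have h2 : ∀ w ∈ S,
        ((Finset.univ.filter (fun φ : H ≃g H => φ u ∈ S)).filter
          (fun φ => φ u = w)).card = c := by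
      intro w hw
      rw [Finset.filter_filter, ← hfib u w]
      congr 1
      apply Finset.filter_congr
      intro φ _
      constructor
      · exact fun h => h.2
      · exact fun h => ⟨h ▸ hw, h⟩
    rw [Finset.sum_congr rfl h2, Finset.sum_const, smul_eq_mul]
  -- the pullback of S under each automorphism-composed-hom is independent in G
  have hind : ∀ φ : H ≃g H,
      (Finset.univ.filter (fun v : V => φ (f v) ∈ S)).card ≤ indepNum G := by
    intro φ
    apply hG
    intro x hx y hy hadj
    rw [Finset.mem_filter] at hx hy
    exact hSind _ hx.2 _ hy.2 (φ.map_rel_iff.mpr (f.map_adj hadj))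
  -- sum over all automorphisms
  have hsum : ∑ φ : H ≃g H, (Finset.univ.filter (fun v : V => φ (f v) ∈ S)).card
      = S.card * c * Fintype.card V := by
    have swap : ∑ φ : H ≃g H, (Finset.univ.filter (fun v : V => φ (f v) ∈ S)).card
        = ∑ v : V, (Finset.univ.filter (fun φ : H ≃g H => φ (f v) ∈ S)).card := by
      simp only [Finset.card_filter]
      exact Finset.sum_comm
    rw [swap, Finset.sum_congr rfl (fun v _ => key (f v)), Finset.sum_const,
      Finset.card_univ, smul_eq_mul]
    ring
  have hle : S.card * c * Fintype.card V ≤ Fintype.card W * c * indepNum G := by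
    rw [← hsum]
    calc ∑ φ : H ≃g H, (Finset.univ.filter (fun v : V => φ (f v) ∈ S)).card
        ≤ ∑ _φ : H ≃g H, indepNum G := Finset.sum_le_sum (fun φ _ => hind φ)
      _ = Fintype.card (H ≃g H) * indepNum G := by
          rw [Finset.sum_const, Finset.card_univ, smul_eq_mul]
      _ = Fintype.card W * c * indepNum G := by rw [hA]
  rw [← hScard]
  have : S.card * Fintype.card V * c ≤ Fintype.card W * indepNum G * c := by
    calc S.card * Fintype.card V * c = S.card * c * Fintype.card V := by ring
      _ ≤ Fintype.card W * c * indepNum G := hle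
      _ = Fintype.card W * indepNum G * c := by ring
  exact Nat.le_of_mul_le_mul_right this hcpos
end

section
/- Elias-Bassalygo-type bound relating constant-weight and multiply constant-weight codes: A(mn, d, mw) <= ( binom(mn, mw) / binom(n, w)^m ) * M(m, n, d, w). -/
open Finset

/-! ### Auxiliary lemmas -/

lemma card_wt (N W : ℕ) :
    (univ.filter fun x : Fin N → Bool => wt x = W).card = N.choose W := by
  have hp := Finset.card_powersetCard W (univ : Finset (Fin N))
  rw [Finset.card_univ, Fintype.card_fin] at hp
  rw [← hp]
  refine Finset.card_bij' (fun x _ => univ.filter fun i => x i = true)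
    (fun s _ => fun i => decide (i ∈ s)) ?hi ?hj ?left ?right
  case hi =>
    intro x hx
    simp only [mem_filter, mem_univ, true_and] at hx
    simp only [Finset.mem_powersetCard]
    exact ⟨Finset.subset_univ _, hx⟩
  case hj =>
    intro s hs
    simp only [Finset.mem_powersetCard] at hs
    simp only [mem_filter, mem_univ, true_and, wt]
    refine Finset.mem_filter.mpr ⟨Finset.mem_univ _, ?_⟩
    show (univ.filter fun i => decide (i ∈ s) = true).card = W
    rw [← hs.2]; congr 1; ext i; simp
  case left => intro x hx; funext i; simp
  case right => intro s hs; ext i; simp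

lemma wt_comp_perm {N : ℕ} (c : Fin N → Bool) (π : Equiv.Perm (Fin N)) :
    wt (c ∘ ⇑π) = wt c := by
  unfold wt
  rw [← Fintype.card_subtype, ← Fintype.card_subtype]
  exact Fintype.card_congr (π.subtypeEquiv fun i => Iff.rfl)

lemma hammingDist_comp_perm {N : ℕ} (x y : Fin N → Bool) (π : Equiv.Perm (Fin N)) :
    hammingDist (x ∘ ⇑π) (y ∘ ⇑π) = hammingDist x y := by
  unfold hammingDist
  rw [← Fintype.card_subtype, ← Fintype.card_subtype]
  exact Fintype.card_congr (π.subtypeEquiv fun i => Iff.rfl)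

lemma exists_comp_perm {N : ℕ} (c y : Fin N → Bool) (h : wt y = wt c) :
    ∃ π : Equiv.Perm (Fin N), c ∘ ⇑π = y := by
  have h1 : Fintype.card {i // y i = true} = Fintype.card {i // c i = true} := by
    rw [Fintype.card_subtype, Fintype.card_subtype]; exact h
  have h2 : Fintype.card {i // ¬ (y i = true)} = Fintype.card {i // ¬ (c i = true)} := by
    rw [Fintype.card_subtype_compl, Fintype.card_subtype_compl, h1]
  obtain ⟨e1⟩ := Fintype.card_eq.mp h1
  obtain ⟨e2⟩ := Fintype.card_eq.mp h2
  refine ⟨(Equiv.sumCompl fun i => y i = true).symm.trans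
    ((e1.sumCongr e2).trans (Equiv.sumCompl fun i => c i = true)), ?_⟩
  funext i
  simp only [Function.comp_apply, Equiv.trans_apply]
  by_cases hy : y i = true
  · rw [Equiv.sumCompl_symm_apply_of_pos (p := fun i => y i = true) hy]
    simp only [Equiv.sumCongr_apply, Sum.map_inl, Equiv.sumCompl_apply_inl]
    exact (e1 ⟨i, hy⟩).2.trans hy.symm
  · rw [Equiv.sumCompl_symm_apply_of_neg (p := fun i => y i = true) hy]
    simp only [Equiv.sumCongr_apply, Sum.map_inr, Equiv.sumCompl_apply_inr]
    have := (e2 ⟨i, hy⟩).2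
    simp only [Bool.not_eq_true] at this hy
    rw [this, hy]

lemma fiber_card {N : ℕ} (c y : Fin N → Bool) (h : wt y = wt c) :
    (univ.filter fun π : Equiv.Perm (Fin N) => c ∘ ⇑π = y).card =
      (univ.filter fun π : Equiv.Perm (Fin N) => c ∘ ⇑π = c).card := by
  obtain ⟨π₀, hπ₀⟩ := exists_comp_perm c y h
  refine Finset.card_bij' (fun π _ => π₀.symm.trans π) (fun σ _ => π₀.trans σ) ?hi ?hj ?left ?right
  case hi =>
    intro π hπ
    simp only [mem_filter, mem_univ, true_and] at hπ ⊢
    funext i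
    have h1 := congrFun hπ (π₀.symm i)
    have h2 := congrFun hπ₀ (π₀.symm i)
    simp only [Function.comp_apply, Equiv.apply_symm_apply] at h1 h2
    simpa [Function.comp_apply, Equiv.trans_apply] using h1.trans h2.symm
  case hj =>
    intro σ hσ
    simp only [mem_filter, mem_univ, true_and] at hσ ⊢
    funext i
    have h1 := congrFun hσ (π₀ i)
    have h2 := congrFun hπ₀ i
    simp only [Function.comp_apply] at h1 h2
    simpa [Function.comp_apply, Equiv.trans_apply] using h1.trans h2
  case left => intro π _; ext i; simp
  case right => intro σ _; ext i; simp

lemma perm_count {N : ℕ} (c : Fin N → Bool) :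
    N.factorial = N.choose (wt c) *
      (univ.filter fun π : Equiv.Perm (Fin N) => c ∘ ⇑π = c).card := by
  have hcard : (univ : Finset (Equiv.Perm (Fin N))).card = N.factorial := by
    rw [Finset.card_univ, Fintype.card_perm, Fintype.card_fin]
  rw [← hcard]
  rw [Finset.card_eq_sum_card_fiberwise
    (f := fun π : Equiv.Perm (Fin N) => c ∘ ⇑π)
    (t := univ.filter fun x : Fin N → Bool => wt x = wt c)
    (fun π _ => by simp [wt_comp_perm])]
  rw [Finset.sum_congr rfl (fun y hy => ?_), Finset.sum_const, smul_eq_mul, card_wt]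
  simp only [mem_filter, mem_univ, true_and] at hy
  simpa using fiber_card c y hy

/-- The `i`-th block (row) of a word of length `m*n`. -/
def row {m n : ℕ} (x : Fin (m*n) → Bool) (i : Fin m) (j : Fin n) : Bool :=
  x (finProdFinEquiv (i, j))

lemma card_filter_blocks {m n : ℕ} (p : Fin (m*n) → Prop) [DecidablePred p] :
    (univ.filter p).card =
      ∑ i : Fin m, (univ.filter fun j : Fin n => p (finProdFinEquiv (i, j))).card := by
  rw [← Fintype.card_subtype]
  have e1 : {k // p k} ≃ {q : Fin m × Fin n // p (finProdFinEquiv q)} :=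
    (finProdFinEquiv.subtypeEquiv fun q => Iff.rfl).symm
  have e2 : {q : Fin m × Fin n // p (finProdFinEquiv q)} ≃
      Σ i : Fin m, {j // p (finProdFinEquiv (i, j))} :=
    Equiv.subtypeProdEquivSigmaSubtype fun i j => p (finProdFinEquiv (i, j))
  rw [Fintype.card_congr (e1.trans e2), Fintype.card_sigma]
  simp [Fintype.card_subtype]

lemma wt_eq_sum_rows {m n : ℕ} (x : Fin (m*n) → Bool) :
    wt x = ∑ i, wt (row x i) := by
  unfold wt row
  exact card_filter_blocks fun k => x k = true

lemma hammingDist_eq_sum_rows {m n : ℕ} (x y : Fin (m*n) → Bool) :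
    hammingDist x y = ∑ i, hammingDist (row x i) (row y i) := by
  show (univ.filter fun k => x k ≠ y k).card = ∑ i, ((univ.filter
    fun j => row x i j ≠ row y i j)).card
  exact card_filter_blocks fun k => x k ≠ y k

lemma row_injective {m n : ℕ} : Function.Injective (fun x : Fin (m*n) → Bool => row x) := by
  intro x y h
  funext k
  have h2 := congrFun (congrFun h (finProdFinEquiv.symm k).1) (finProdFinEquiv.symm k).2
  simp only [row, Prod.mk.eta, Equiv.apply_symm_apply] at h2
  exact h2

lemma card_T {m n w : ℕ} :
    (univ.filter fun x : Fin (m*n) → Bool => ∀ i, wt (row x i) = w).card = (n.choose w)^m := by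
  have : ((Fintype.piFinset fun _ : Fin m =>
      univ.filter fun r : Fin n → Bool => wt r = w)).card = (n.choose w)^m := by
    rw [Fintype.card_piFinset]
    simp [card_wt]
  rw [← this]
  refine Finset.card_bij' (fun x _ => row x)
    (fun Y _ => fun k => Y (finProdFinEquiv.symm k).1 (finProdFinEquiv.symm k).2)
    ?hi ?hj ?left ?right
  case hi =>
    intro x hx
    simp only [mem_filter, mem_univ, true_and] at hx
    simp only [Fintype.mem_piFinset, mem_filter, mem_univ, true_and]
    exact hx
  case hj =>
    intro Y hY
    simp only [Fintype.mem_piFinset, mem_filter, mem_univ, true_and] at hY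
    simp only [mem_filter, mem_univ, true_and]
    intro i
    have : (row (fun k => Y (finProdFinEquiv.symm k).1 (finProdFinEquiv.symm k).2) i) = Y i := by
      funext j; unfold row; simp only [Equiv.symm_apply_apply]
    rw [this]; exact hY i
  case left =>
    intro x _
    funext k
    show x (finProdFinEquiv ((finProdFinEquiv.symm k).1, (finProdFinEquiv.symm k).2)) = x k
    rw [Prod.mk.eta, Equiv.apply_symm_apply]
  case right =>
    intro Y _
    funext i j
    show Y (finProdFinEquiv.symm (finProdFinEquiv (i, j))).1
      (finProdFinEquiv.symm (finProdFinEquiv (i, j))).2 = Y i j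
    rw [Equiv.symm_apply_apply]

/-- Elias–Bassalygo-type bound:
`A(mn, d, mw) ≤ (C(mn,mw)/C(n,w)^m) · M(m,n,d,w)`. -/
theorem stmt17 (m n d w : ℕ) (hw : w ≤ n) :
    (A (m * n) d (m * w) : ℚ) ≤
      ((m * n).choose (m * w) : ℚ) / ((n.choose w : ℚ)) ^ m * (M m n d w : ℚ) := by
  classical
  set ch := (m * n).choose (m * w) with hch
  -- T : blockwise weight-w words
  set T : Finset (Fin (m*n) → Bool) :=
    univ.filter fun x => ∀ i, wt (row x i) = w with hTdef
  have hTwt : ∀ y ∈ T, wt y = m * w := by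
    intro y hy
    simp only [hTdef, mem_filter, mem_univ, true_and] at hy
    rw [wt_eq_sum_rows]
    simp [hy, Finset.sum_const, mul_comm]
  have hTcard : T.card = (n.choose w)^m := card_T
  -- obtain an optimal code C
  have hAmem : A (m*n) d (m*w) ∈ {s | ∃ C : Finset (Fin (m*n) → Bool), C.card = s ∧
      (∀ x ∈ C, wt x = m*w) ∧ ∀ x ∈ C, ∀ y ∈ C, x ≠ y → d ≤ hammingDist x y} := by
    apply Nat.sSup_mem
    · exact ⟨0, ∅, by simp⟩
    · refine ⟨Fintype.card (Fin (m*n) → Bool), fun s hs => ?_⟩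
      obtain ⟨C, hC, -, -⟩ := hs
      exact hC ▸ (Finset.card_le_univ C).trans_eq Finset.card_univ
  obtain ⟨C, hCcard, hCwt, hCdist⟩ := hAmem
  -- the key natural-number inequality
  have key : A (m*n) d (m*w) * (n.choose w)^m ≤ ch * M m n d w := by
    -- double counting
    have count : ∀ c ∈ C,
        (univ.filter fun π : Equiv.Perm (Fin (m*n)) => (c ∘ ⇑π) ∈ T).card =
          ∑ y ∈ T, (univ.filter fun π : Equiv.Perm (Fin (m*n)) => c ∘ ⇑π = y).card := by
      intro c hc
      rw [Finset.card_eq_sum_card_fiberwise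
        (f := fun π : Equiv.Perm (Fin (m*n)) => c ∘ ⇑π) (t := T)
        (s := univ.filter fun π : Equiv.Perm (Fin (m*n)) => (c ∘ ⇑π) ∈ T)
        (fun π hπ => (mem_filter.mp hπ).2)]
      refine Finset.sum_congr rfl fun y hy => ?_
      congr 1
      rw [Finset.filter_filter]
      exact Finset.filter_congr fun π _ => ⟨fun h => h.2, fun h => ⟨by show c ∘ ⇑π ∈ T; rw [h]; exact hy, h⟩⟩
    have fibval : ∀ c ∈ C, ∀ y ∈ T,
        ch * (univ.filter fun π : Equiv.Perm (Fin (m*n)) => c ∘ ⇑π = y).card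
          = (m*n).factorial := by
      intro c hc y hy
      rw [fiber_card c y ((hTwt y hy).trans (hCwt c hc).symm)]
      rw [hch, ← hCwt c hc]
      exact (perm_count c).symm
    have total : ∑ π : Equiv.Perm (Fin (m*n)),
        ch * (C.filter fun c => (c ∘ ⇑π) ∈ T).card
          = C.card * T.card * (m*n).factorial := by
      have swap : ∑ π : Equiv.Perm (Fin (m*n)), (C.filter fun c => (c ∘ ⇑π) ∈ T).card
          = ∑ c ∈ C, (univ.filter fun π : Equiv.Perm (Fin (m*n)) => (c ∘ ⇑π) ∈ T).card := by
        simp only [Finset.card_filter]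
        rw [Finset.sum_comm]
      rw [← Finset.mul_sum, swap, Finset.mul_sum]
      calc ∑ c ∈ C, ch * (univ.filter fun π : Equiv.Perm (Fin (m*n)) => (c ∘ ⇑π) ∈ T).card
          = ∑ c ∈ C, ∑ y ∈ T, ch *
              (univ.filter fun π : Equiv.Perm (Fin (m*n)) => c ∘ ⇑π = y).card := by
            refine Finset.sum_congr rfl fun c hc => ?_
            rw [count c hc, Finset.mul_sum]
        _ = ∑ c ∈ C, ∑ y ∈ T, (m*n).factorial := by
            refine Finset.sum_congr rfl fun c hc => Finset.sum_congr rfl fun y hy =>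
              fibval c hc y hy
        _ = C.card * T.card * (m*n).factorial := by
            simp [Finset.sum_const, mul_assoc]
    -- pigeonhole
    have hne : (univ : Finset (Equiv.Perm (Fin (m*n)))).Nonempty := univ_nonempty
    have hsum : ∑ _π : Equiv.Perm (Fin (m*n)), C.card * T.card
        ≤ ∑ π : Equiv.Perm (Fin (m*n)), ch * (C.filter fun c => (c ∘ ⇑π) ∈ T).card := by
      rw [total, Finset.sum_const, smul_eq_mul, Finset.card_univ, Fintype.card_perm,
        Fintype.card_fin]
      ring_nf
      exact le_refl _
    obtain ⟨π, -, hπ⟩ := Finset.exists_le_of_sum_le hne hsum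
    -- the selected sub-code gives a multiply constant-weight code
    have hMle : (C.filter fun c => (c ∘ ⇑π) ∈ T).card ≤ M m n d w := by
      set D := (C.filter fun c => (c ∘ ⇑π) ∈ T).image (fun c => row (c ∘ ⇑π)) with hD
      have hinj : Function.Injective (fun c : Fin (m*n) → Bool => row (c ∘ ⇑π)) := by
        intro a b hab
        have : a ∘ ⇑π = b ∘ ⇑π := row_injective hab
        funext k
        have := congrFun this (π.symm k)
        simpa using this
      have hDcard : D.card = (C.filter fun c => (c ∘ ⇑π) ∈ T).card :=
        Finset.card_image_of_injective _ hinj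
      apply le_csSup
      · refine ⟨Fintype.card (Fin m → Fin n → Bool), fun s hs => ?_⟩
        obtain ⟨E, hE, -, -⟩ := hs
        exact hE ▸ (Finset.card_le_univ E).trans_eq Finset.card_univ
      · refine ⟨D, hDcard, ?_, ?_⟩
        · intro X hX i
          obtain ⟨c, hc, rfl⟩ := Finset.mem_image.mp hX
          have := (mem_filter.mp hc).2
          simp only [hTdef, mem_filter, mem_univ, true_and] at this
          exact this i
        · intro X hX Y hY hXY
          obtain ⟨c, hc, rfl⟩ := Finset.mem_image.mp hX
          obtain ⟨c', hc', rfl⟩ := Finset.mem_image.mp hY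
          have hcc' : c ≠ c' := fun h => hXY (by rw [h])
          have hd := hCdist c (mem_filter.mp hc).1 c' (mem_filter.mp hc').1 hcc'
          rw [← hammingDist_comp_perm c c' π, hammingDist_eq_sum_rows] at hd
          exact hd
    calc A (m*n) d (m*w) * (n.choose w)^m = C.card * T.card := by rw [hCcard, hTcard]
      _ ≤ ch * (C.filter fun c => (c ∘ ⇑π) ∈ T).card := hπ
      _ ≤ ch * M m n d w := Nat.mul_le_mul_left ch hMle
  -- conclude over ℚ
  have hcw : (0:ℚ) < ((n.choose w : ℚ)) ^ m :=
    pow_pos (by exact_mod_cast Nat.choose_pos hw) m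
  rw [div_mul_eq_mul_div, le_div_iff₀ hcw]
  calc (A (m*n) d (m*w) : ℚ) * ((n.choose w : ℚ))^m
      = ((A (m*n) d (m*w) * (n.choose w)^m : ℕ) : ℚ) := by push_cast; ring
    _ ≤ ((ch * M m n d w : ℕ) : ℚ) := by exact_mod_cast key
    _ = (ch : ℚ) * (M m n d w : ℚ) := by push_cast; ring
end
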